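/- arXiv:1802.08647 — 11 statements merged into one kernel-verified Lean document; each statement's English description precedes it below -/
import Mathlib

section
/- Let D = M₊ ⊕ M₋ be a closed subspace of ℋ, where M₊ ⊆ ℋ₊ and M₋ ⊆ ℋ₋ are closed subspaces, and let T₀ : D → ℋ be a linear strong contraction satisfying J T₀ f = −T₀ J f for all f ∈ D (note J maps D into D). Set L₊ = (I + T₀)(M₊) and L₋ = (I + T₀)(M₋). Then [f₊, f₋] = 0 for all f₊ ∈ L₊ and all f₋ ∈ L₋ if and only if T₀ is symmetric, i.e. ⟨T₀ f, g⟩ = ⟨f, T₀ g⟩ for all f, g ∈ D. -/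
/-- Orthogonality of the dual subspaces `L± = (I+T₀)M±` with respect to the
indefinite inner ℂ product `[f,g] = ⟨Jf,g⟩` is equivalent to the symmetry of `T₀` on
`D = M₊ ⊕ M₋`. -/
theorem stmt_0
    {H : Type*} [NormedAddCommGroup H] [InnerProductSpace ℂ H] [CompleteSpace H]
    (J : H →L[ℂ] H) (hJsa : IsSelfAdjoint J) (hJ2 : J ∘L J = 1)
    (Mp Mm : Submodule ℂ H)
    (hMpc : IsClosed (Mp : Set H)) (hMmc : IsClosed (Mm : Set H))
    (hMp : ∀ x ∈ Mp, J x = x) (hMm : ∀ x ∈ Mm, J x = -x)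
    (D : Submodule ℂ H) (hD : D = Mp ⊔ Mm) (hDc : IsClosed (D : Set H))
    (T₀ : H →ₗ[ℂ] H)
    (hsc : ∀ f ∈ D, f ≠ 0 → ‖T₀ f‖ < ‖f‖)
    (hJD : ∀ f ∈ D, J f ∈ D)
    (hanti : ∀ f ∈ D, J (T₀ f) = -T₀ (J f)) :
    (∀ x ∈ Mp, ∀ y ∈ Mm,
        (inner ℂ (J (x + T₀ x)) (y + T₀ y) : ℂ) = 0) ↔
      (∀ f ∈ D, ∀ g ∈ D, (inner ℂ (T₀ f) g : ℂ) = inner ℂ f (T₀ g)) := by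
  have hsym : ∀ a b : H, (inner ℂ (J a) b : ℂ) = inner ℂ a (J b) := fun a b =>
    (ContinuousLinearMap.isSelfAdjoint_iff_isSymmetric.mp hJsa) a b
  have hMpD : Mp ≤ D := by rw [hD]; exact le_sup_left
  have hMmD : Mm ≤ D := by rw [hD]; exact le_sup_right
  -- orthogonality of positive and negative vectors
  have horth : ∀ a b : H, J a = a → J b = -b → (inner ℂ a b : ℂ) = 0 := by
    intro a b ha hb
    have h1 : (inner ℂ a b : ℂ) = - inner ℂ a b := by
      calc (inner ℂ a b : ℂ) = inner ℂ (J a) b := by rw [ha]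
        _ = inner ℂ a (J b) := hsym a b
        _ = - inner ℂ a b := by rw [hb, inner_neg_right]
    linear_combination h1 / 2
  have horth' : ∀ a b : H, J a = a → J b = -b → (inner ℂ b a : ℂ) = 0 := by
    intro a b ha hb
    rw [← inner_conj_symm, horth a b ha hb, map_zero]
  -- J-images of T₀ on Mp and Mm
  have hTp : ∀ x ∈ Mp, J (T₀ x) = -(T₀ x) := by
    intro x hx
    rw [hanti x (hMpD hx), hMp x hx]
  have hTm : ∀ y ∈ Mm, J (T₀ y) = T₀ y := by
    intro y hy
    rw [hanti y (hMmD hy), hMm y hy, map_neg, neg_neg]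
  -- the key computation
  have key : ∀ x ∈ Mp, ∀ y ∈ Mm,
      (inner ℂ (J (x + T₀ x)) (y + T₀ y) : ℂ) = inner ℂ x (T₀ y) - inner ℂ (T₀ x) y := by
    intro x hx y hy
    have hJ : J (x + T₀ x) = x - T₀ x := by
      rw [map_add, hMp x hx, hTp x hx, sub_eq_add_neg]
    rw [hJ, inner_sub_left, inner_add_right, inner_add_right]
    rw [horth x y (hMp x hx) (hMm y hy),
        horth' (T₀ y) (T₀ x) (hTm y hy) (hTp x hx)]
    ring
  constructor
  · intro h f hf g hg
    have hc : ∀ x ∈ Mp, ∀ y ∈ Mm, (inner ℂ (T₀ x) y : ℂ) = inner ℂ x (T₀ y) := by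
      intro x hx y hy
      have h0 := h x hx y hy
      rw [key x hx y hy] at h0
      exact (sub_eq_zero.mp h0).symm
    have hc' : ∀ x ∈ Mm, ∀ y ∈ Mp, (inner ℂ (T₀ x) y : ℂ) = inner ℂ x (T₀ y) := by
      intro x hx y hy
      have h0 := hc y hy x hx
      calc (inner ℂ (T₀ x) y : ℂ) = starRingEnd ℂ (inner ℂ y (T₀ x) : ℂ) :=
            (inner_conj_symm _ _).symm
        _ = starRingEnd ℂ (inner ℂ (T₀ y) x : ℂ) := by rw [h0]
        _ = inner ℂ x (T₀ y) := inner_conj_symm _ _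
    rw [hD] at hf hg
    obtain ⟨x, hx, x', hx', rfl⟩ := Submodule.mem_sup.mp hf
    obtain ⟨y, hy, y', hy', rfl⟩ := Submodule.mem_sup.mp hg
    simp only [map_add, inner_add_left, inner_add_right]
    rw [horth' y (T₀ x) (hMp y hy) (hTp x hx),
        horth (T₀ x') y' (hTm x' hx') (hMm y' hy'),
        horth x (T₀ y) (hMp x hx) (hTp y hy),
        horth' (T₀ y') x' (hTm y' hy') (hMm x' hx'),
        hc x hx y' hy', hc' x' hx' y hy]
  · intro h x hx y hy
    rw [key x hx y hy, sub_eq_zero]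
    exact (h x (hMpD hx) y (hMmD hy)).symm
end

section
/- Let L₊ be a closed positive subspace of the Krein space (ℋ, [·,·]). Then M₊ := P₊(L₊) is a closed subspace of ℋ₊, and there exists a unique linear strong contraction K : M₊ → ℋ₋ such that L₊ = {x + Kx : x ∈ M₊}. -/
/-- The orthogonal projection `P₊ = ½(I + J)` onto `ℋ₊ = ker (J - I)`, as a linear map. -/
noncomputable def Pplus {H : Type*} [NormedAddCommGroup H] [InnerProductSpace ℂ H]
    (J : H →L[ℂ] H) : H →ₗ[ℂ] H :=
  (2 : ℂ)⁻¹ • (LinearMap.id + J.toLinearMap)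


noncomputable def Pminus {H : Type*} [NormedAddCommGroup H] [InnerProductSpace ℂ H]
    (J : H →L[ℂ] H) : H →ₗ[ℂ] H :=
  (2 : ℂ)⁻¹ • (LinearMap.id - J.toLinearMap)

section aux
variable {H : Type*} [NormedAddCommGroup H] [InnerProductSpace ℂ H] (J : H →L[ℂ] H)

lemma Pplus_apply (f : H) : Pplus J f = (2 : ℂ)⁻¹ • (f + J f) := by simp [Pplus]

lemma Pminus_apply (f : H) : Pminus J f = (2 : ℂ)⁻¹ • (f - J f) := by simp [Pminus]

lemma Pplus_add_Pminus (f : H) : Pplus J f + Pminus J f = f := by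
  rw [Pplus_apply, Pminus_apply]; module

lemma JJ (hJ2 : J ∘L J = 1) (f : H) : J (J f) = f := by
  have := ContinuousLinearMap.ext_iff.mp hJ2 f
  simpa using this

lemma J_Pplus (hJ2 : J ∘L J = 1) (f : H) : J (Pplus J f) = Pplus J f := by
  rw [Pplus_apply, map_smul, map_add, JJ J hJ2]; module

lemma J_Pminus (hJ2 : J ∘L J = 1) (f : H) : J (Pminus J f) = -(Pminus J f) := by
  rw [Pminus_apply, map_smul, map_sub, JJ J hJ2]; module

variable [CompleteSpace H]

lemma normsq_J (hJsa : IsSelfAdjoint J) (hJ2 : J ∘L J = 1) (f : H) : ‖J f‖ ^ 2 = ‖f‖ ^ 2 := by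
  have hsym := ContinuousLinearMap.isSelfAdjoint_iff_isSymmetric.mp hJsa
  have hsym' : (inner ℂ (J f) (J f) : ℂ) = inner ℂ f (J (J f)) := hsym f (J f)
  rw [← inner_self_eq_norm_sq (𝕜 := ℂ), ← inner_self_eq_norm_sq (𝕜 := ℂ) f,
    hsym', JJ J hJ2]

omit [CompleteSpace H] in
lemma re_inner_symm (f : H) : (inner ℂ f (J f) : ℂ).re = (inner ℂ (J f) f : ℂ).re := by
  rw [← inner_conj_symm f (J f), Complex.conj_re]

lemma normsq_Pplus (hJsa : IsSelfAdjoint J) (hJ2 : J ∘L J = 1) (f : H) :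
    ‖Pplus J f‖ ^ 2 = (‖f‖ ^ 2 + (inner ℂ (J f) f : ℂ).re) / 2 := by
  rw [Pplus_apply, norm_smul]
  have h2 : ‖(2 : ℂ)⁻¹‖ = 2⁻¹ := by simp
  rw [h2, mul_pow, norm_add_sq (𝕜 := ℂ), normsq_J J hJsa hJ2]
  simp only [RCLike.re_to_complex]
  rw [re_inner_symm]
  ring

lemma normsq_Pminus (hJsa : IsSelfAdjoint J) (hJ2 : J ∘L J = 1) (f : H) :
    ‖Pminus J f‖ ^ 2 = (‖f‖ ^ 2 - (inner ℂ (J f) f : ℂ).re) / 2 := by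
  rw [Pminus_apply, norm_smul]
  have h2 : ‖(2 : ℂ)⁻¹‖ = 2⁻¹ := by simp
  rw [h2, mul_pow, norm_sub_sq (𝕜 := ℂ), normsq_J J hJsa hJ2]
  simp only [RCLike.re_to_complex]
  rw [re_inner_symm]
  ring

end aux

/-- A closed positive subspace `L₊` of the Krein space `(H,[·,·])` is the graph
`{x + Kx : x ∈ M₊}` of a unique strong contraction `K : M₊ → ℋ₋`, where `M₊ = P₊(L₊)` is a
closed subspace of `ℋ₊`. -/
theorem stmt_2
    {H : Type*} [NormedAddCommGroup H] [InnerProductSpace ℂ H] [CompleteSpace H]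
    (J : H →L[ℂ] H) (hJsa : IsSelfAdjoint J) (hJ2 : J ∘L J = 1)
    (Lp : Submodule ℂ H) (hLpc : IsClosed (Lp : Set H))
    (hpos : ∀ f ∈ Lp, f ≠ 0 → 0 < (inner ℂ (J f) f : ℂ).re) :
    IsClosed ((Lp.map (Pplus J) : Submodule ℂ H) : Set H) ∧
    (∀ x ∈ Lp.map (Pplus J), J x = x) ∧
    ∃! K : ↥(Lp.map (Pplus J)) →ₗ[ℂ] H,
      (∀ x : ↥(Lp.map (Pplus J)), J (K x) = -(K x)) ∧
      (∀ x : ↥(Lp.map (Pplus J)), (x : H) ≠ 0 → ‖K x‖ < ‖(x : H)‖) ∧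
      (Lp : Set H) = Set.range fun x : ↥(Lp.map (Pplus J)) => (x : H) + K x := by
  -- the key norm bound on `Lp`
  have hbound : ∀ f ∈ Lp, ‖f‖ ≤ 2 * ‖Pplus J f‖ := by
    intro f hf
    rcases eq_or_ne f 0 with rfl | hf0
    · simp
    · have hr := hpos f hf hf0
      have h1 := normsq_Pplus J hJsa hJ2 f
      nlinarith [norm_nonneg f, norm_nonneg (Pplus J f)]
  have hinj : ∀ f ∈ Lp, Pplus J f = 0 → f = 0 := by
    intro f hf h0
    have := hbound f hf
    rw [h0, norm_zero] at this
    have : ‖f‖ = 0 := le_antisymm (by linarith) (norm_nonneg f)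
    simpa using this
  -- closedness of M₊
  haveI : CompleteSpace Lp := hLpc.completeSpace_coe
  let Ppc : H →L[ℂ] H := (2 : ℂ)⁻¹ • (ContinuousLinearMap.id ℂ H + J)
  have hPpc : ∀ f, Ppc f = Pplus J f := fun f => by
    simp [Ppc, Pplus_apply]
  let g : Lp →L[ℂ] H := Ppc.comp Lp.subtypeL
  have hanti : AntilipschitzWith 2 g := by
    apply g.antilipschitz_of_bound
    intro u
    have := hbound u u.2
    simpa [g, hPpc u] using this
  have hrange : Set.range g = ((Lp.map (Pplus J) : Submodule ℂ H) : Set H) := by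
    ext y
    constructor
    · rintro ⟨u, rfl⟩
      exact ⟨u, u.2, (hPpc u).symm ▸ rfl⟩
    · rintro ⟨f, hf, rfl⟩
      exact ⟨⟨f, hf⟩, hPpc f⟩
  have hclosed : IsClosed ((Lp.map (Pplus J) : Submodule ℂ H) : Set H) := by
    rw [← hrange]; exact hanti.isClosed_range g.uniformContinuous
  refine ⟨hclosed, ?_, ?_⟩
  · rintro x ⟨f, hf, rfl⟩
    exact J_Pplus J hJ2 f
  -- the equivalence between Lp and M₊
  · have hpart2 : ∀ x ∈ Lp.map (Pplus J), J x = x := by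
      rintro x ⟨f, hf, rfl⟩; exact J_Pplus J hJ2 f
    set M := Lp.map (Pplus J) with hMdef
    let e0 : Lp →ₗ[ℂ] M :=
      LinearMap.codRestrict M ((Pplus J).comp Lp.subtype)
        (fun u => Submodule.mem_map_of_mem u.2)
    have he0 : ∀ u : Lp, (e0 u : H) = Pplus J (u : H) := fun u => rfl
    have hbij : Function.Bijective e0 := by
      constructor
      · intro u v huv
        have h : Pplus J ((u : H) - (v : H)) = 0 := by
          rw [map_sub, sub_eq_zero]
          rw [← he0, ← he0, huv]
        have := hinj _ (Lp.sub_mem u.2 v.2) h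
        exact Subtype.ext (sub_eq_zero.mp this)
      · rintro ⟨x, f, hf, hfx⟩
        exact ⟨⟨f, hf⟩, Subtype.ext hfx⟩
    let e : Lp ≃ₗ[ℂ] M := LinearEquiv.ofBijective e0 hbij
    have hesymm : ∀ x : M, Pplus J ((e.symm x : Lp) : H) = (x : H) := by
      intro x
      have : e (e.symm x) = x := e.apply_symm_apply x
      have := congrArg (Subtype.val) this
      rwa [show (e (e.symm x) : H) = Pplus J ((e.symm x : Lp) : H) from rfl] at this
    let K : M →ₗ[ℂ] H := (Pminus J) ∘ₗ (Lp.subtype ∘ₗ e.symm.toLinearMap)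
    have hK : ∀ x : M, K x = Pminus J ((e.symm x : Lp) : H) := fun x => rfl
    refine ⟨K, ⟨?_, ?_, ?_⟩, ?_⟩
    · intro x
      rw [hK]
      exact J_Pminus J hJ2 _
    · intro x hx
      set u : Lp := e.symm x with hu
      have hpu : Pplus J (u : H) = (x : H) := hesymm x
      have hu0 : (u : H) ≠ 0 := by
        intro h
        apply hx
        rw [← hpu, h, map_zero]
      have hr := hpos (u : H) u.2 hu0
      have h1 := normsq_Pplus J hJsa hJ2 (u : H)
      have h2 := normsq_Pminus J hJsa hJ2 (u : H)
      have hlt : ‖K x‖ ^ 2 < ‖(x : H)‖ ^ 2 := by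
        rw [hK, ← hu, ← hpu, h1, h2]; linarith
      exact lt_of_pow_lt_pow_left₀ 2 (norm_nonneg _) hlt
    · ext f
      simp only [SetLike.mem_coe, Set.mem_range]
      constructor
      · intro hf
        refine ⟨e ⟨f, hf⟩, ?_⟩
        rw [hK, e.symm_apply_apply]
        rw [show ((e ⟨f, hf⟩ : M) : H) = Pplus J f from rfl]
        exact Pplus_add_Pminus J f
      · rintro ⟨x, rfl⟩
        have hpu := hesymm x
        rw [hK, ← hpu, Pplus_add_Pminus J]
        exact (e.symm x).2
    · rintro K' ⟨h1, h2, h3⟩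
      ext x
      have hmem : (x : H) + K' x ∈ Lp := by
        rw [← SetLike.mem_coe, h3]
        exact ⟨x, rfl⟩
      have hx : J (x : H) = x := hpart2 x x.2
      have hPp : Pplus J ((x : H) + K' x) = (x : H) := by
        rw [Pplus_apply, map_add, hx, h1 x]
        module
      have hKx : Pminus J ((x : H) + K' x) = K' x := by
        rw [Pminus_apply, map_add, hx, h1 x]
        module
      have hsymmx : e.symm x = ⟨(x : H) + K' x, hmem⟩ := by
        rw [LinearEquiv.symm_apply_eq]
        exact Subtype.ext hPp.symm
      rw [hK, hsymmx]
      exact hKx.symm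
end

section
/- Let D = M₊ ⊕ M₋ be a closed subspace of ℋ, where M₊ ⊆ ℋ₊ and M₋ ⊆ ℋ₋ are closed subspaces, and let T₀ : D → ℋ be a symmetric linear strong contraction satisfying J T₀ f = −T₀ J f for all f ∈ D. Set L₊ = (I + T₀)(M₊) and L₋ = (I + T₀)(M₋). Then L₊ is a maximal positive subspace and L₋ is a maximal negative subspace of the Krein space (ℋ, [·,·]) if and only if D = ℋ (equivalently, M₊ = ℋ₊ and M₋ = ℋ₋); in this case T₀ is a self-adjoint strong contraction defined on all of ℋ. -/
section Aux

private lemma aux_re (r : ℝ) : ((r : ℂ) ^ 2).re = r ^ 2 := by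
  rw [← Complex.ofReal_pow]; exact Complex.ofReal_re _

private lemma aux_re_inner_self {H : Type*} [NormedAddCommGroup H] [InnerProductSpace ℂ H]
    (x : H) : (inner ℂ x x : ℂ).re = ‖x‖ ^ 2 := by
  have h := @inner_self_eq_norm_sq ℂ _ _ _ _ x
  simpa using h

variable {H : Type*} [NormedAddCommGroup H] [InnerProductSpace ℂ H] [CompleteSpace H]

private lemma aux_orth (J : H →L[ℂ] H) (hJsa : IsSelfAdjoint J) (a b : H)
    (ha : J a = a) (hb : J b = -b) : (inner ℂ a b : ℂ) = 0 := by
  have h := hJsa.isSymmetric a b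
  simp only [ContinuousLinearMap.coe_coe] at h
  rw [ha, hb, inner_neg_right] at h
  linear_combination h / 2

private lemma aux_key (J : H →L[ℂ] H) (hJsa : IsSelfAdjoint J) (a b : H)
    (ha : J a = a) (hb : J b = -b) :
    (inner ℂ (J (a + b)) (a + b) : ℂ).re = ‖a‖ ^ 2 - ‖b‖ ^ 2 := by
  have hab : (inner ℂ a b : ℂ) = 0 := aux_orth J hJsa a b ha hb
  have hba : (inner ℂ b a : ℂ) = 0 := by rw [← inner_conj_symm, hab]; simp
  have hJab : J (a + b) = a - b := by rw [map_add, ha, hb, sub_eq_add_neg]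
  rw [hJab, inner_sub_left, inner_add_right, inner_add_right, hab, hba,
    inner_self_eq_norm_sq_to_K, inner_self_eq_norm_sq_to_K]
  simp [Complex.sub_re, Complex.add_re, aux_re]

end Aux

set_option maxHeartbeats 1000000 in
/-- For a symmetric strong contraction `T₀` on `D = M₊ ⊕ M₋` anticommuting
with `J`, the dual definite subspaces `L± = (I+T₀)M±` are maximal definite iff `D = ℋ`
(equivalently `M₊ = ℋ₊` and `M₋ = ℋ₋`); in this case `T₀` is an everywhere defined
self-adjoint strong contraction. -/
theorem stmt_4
    {H : Type*} [NormedAddCommGroup H] [InnerProductSpace ℂ H] [CompleteSpace H]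
    (J : H →L[ℂ] H) (hJsa : IsSelfAdjoint J) (hJ2 : J ∘L J = 1)
    (Mp Mm : Submodule ℂ H)
    (hMpc : IsClosed (Mp : Set H)) (hMmc : IsClosed (Mm : Set H))
    (hMp : ∀ x ∈ Mp, J x = x) (hMm : ∀ x ∈ Mm, J x = -x)
    (D : Submodule ℂ H) (hD : D = Mp ⊔ Mm) (hDc : IsClosed (D : Set H))
    (T₀ : H →ₗ[ℂ] H)
    (hsc : ∀ f ∈ D, f ≠ 0 → ‖T₀ f‖ < ‖f‖)
    (hJD : ∀ f ∈ D, J f ∈ D)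
    (hanti : ∀ f ∈ D, J (T₀ f) = -T₀ (J f))
    (hsymm : ∀ f ∈ D, ∀ g ∈ D, (inner ℂ (T₀ f) g : ℂ) = inner ℂ f (T₀ g)) :
    (((∀ f ∈ Mp.map (LinearMap.id + T₀), f ≠ 0 → 0 < (inner ℂ (J f) f : ℂ).re) ∧
      (∀ L' : Submodule ℂ H, (∀ f ∈ L', f ≠ 0 → 0 < (inner ℂ (J f) f : ℂ).re) →
        Mp.map (LinearMap.id + T₀) ≤ L' → Mp.map (LinearMap.id + T₀) = L') ∧
      (∀ f ∈ Mm.map (LinearMap.id + T₀), f ≠ 0 → (inner ℂ (J f) f : ℂ).re < 0) ∧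
      (∀ L' : Submodule ℂ H, (∀ f ∈ L', f ≠ 0 → (inner ℂ (J f) f : ℂ).re < 0) →
        Mm.map (LinearMap.id + T₀) ≤ L' → Mm.map (LinearMap.id + T₀) = L')) ↔
      D = ⊤) ∧
    (D = ⊤ ↔ (Mp = LinearMap.ker (J.toLinearMap - LinearMap.id) ∧
              Mm = LinearMap.ker (J.toLinearMap + LinearMap.id))) ∧
    (D = ⊤ → (LinearMap.IsSymmetric T₀ ∧ ∀ f : H, f ≠ 0 → ‖T₀ f‖ < ‖f‖)) := by
  have hMpD : Mp ≤ D := hD ▸ le_sup_left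
  have hMmD : Mm ≤ D := hD ▸ le_sup_right
  have hTp : ∀ x ∈ Mp, J (T₀ x) = -(T₀ x) := fun x hx => by
    rw [hanti x (hMpD hx), hMp x hx]
  have hTm : ∀ x ∈ Mm, J (T₀ x) = T₀ x := fun x hx => by
    rw [hanti x (hMmD hx), hMm x hx, map_neg, neg_neg]
  have hmemLp : ∀ f, f ∈ Mp.map (LinearMap.id + T₀) ↔ ∃ x ∈ Mp, x + T₀ x = f := by
    intro f; simp [Submodule.mem_map, LinearMap.add_apply]
  have hmemLm : ∀ f, f ∈ Mm.map (LinearMap.id + T₀) ↔ ∃ x ∈ Mm, x + T₀ x = f := by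
    intro f; simp [Submodule.mem_map, LinearMap.add_apply]
  have hJJ : ∀ x, J (J x) = x := fun x => by
    have h := ContinuousLinearMap.ext_iff.1 hJ2 x; simpa using h
  -- unconditional (semi-)definiteness of L±
  have hpos : ∀ f ∈ Mp.map (LinearMap.id + T₀), f ≠ 0 → 0 < (inner ℂ (J f) f : ℂ).re := by
    intro f hf hne
    obtain ⟨x, hx, rfl⟩ := (hmemLp f).1 hf
    have hx0 : x ≠ 0 := by rintro rfl; simp at hne
    rw [aux_key J hJsa x (T₀ x) (hMp x hx) (hTp x hx)]
    have h := hsc x (hMpD hx) hx0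
    nlinarith [norm_nonneg (T₀ x), norm_nonneg x]
  have hneg : ∀ f ∈ Mm.map (LinearMap.id + T₀), f ≠ 0 → (inner ℂ (J f) f : ℂ).re < 0 := by
    intro f hf hne
    obtain ⟨x, hx, rfl⟩ := (hmemLm f).1 hf
    have hx0 : x ≠ 0 := by rintro rfl; simp at hne
    have harr : x + T₀ x = T₀ x + x := by abel
    rw [harr, aux_key J hJsa (T₀ x) x (hTm x hx) (hMm x hx)]
    have h := hsc x (hMmD hx) hx0
    nlinarith [norm_nonneg (T₀ x), norm_nonneg x]
  -- plus/minus parts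
  have hplusJ : ∀ f : H, J ((2⁻¹ : ℂ) • (f + J f)) = (2⁻¹ : ℂ) • (f + J f) := by
    intro f; rw [map_smul, map_add, hJJ, add_comm]
  have hminusJ : ∀ f : H, J ((2⁻¹ : ℂ) • (f - J f)) = -((2⁻¹ : ℂ) • (f - J f)) := by
    intro f; rw [map_smul, map_sub, hJJ, ← smul_neg, neg_sub]
  have hsplit : ∀ f : H, (2⁻¹ : ℂ) • (f + J f) + (2⁻¹ : ℂ) • (f - J f) = f := by
    intro f
    have h : (f + J f) + (f - J f) = (2 : ℂ) • f := by rw [two_smul]; abel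
    rw [← smul_add, h, smul_smul]; norm_num
  -- conjunct 2, forward
  have hMpTop : D = ⊤ → Mp = LinearMap.ker (J.toLinearMap - LinearMap.id) := by
    intro htop
    apply le_antisymm
    · intro x hx
      simp only [LinearMap.mem_ker, LinearMap.sub_apply, LinearMap.id_apply,
        ContinuousLinearMap.coe_coe, sub_eq_zero]
      exact hMp x hx
    · intro x hx
      have hJx : J x = x := by
        simpa [LinearMap.mem_ker, LinearMap.sub_apply, sub_eq_zero] using hx
      have hxD : x ∈ Mp ⊔ Mm := by rw [← hD, htop]; trivial
      obtain ⟨p, hp, m, hm, rfl⟩ := Submodule.mem_sup.1 hxD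
      have h1 : p + -m = p + m := by
        rw [← hJx, map_add, hMp p hp, hMm m hm]
      have h2 : -m = m := add_left_cancel h1
      have h3 : (2 : ℂ) • m = 0 := by
        have hmm0 : m + m = 0 := by nth_rewrite 1 [← h2]; try simp
        rw [two_smul, hmm0]
      have hm0 : m = 0 := by
        rcases smul_eq_zero.1 h3 with h | h
        · norm_num at h
        · exact h
      rw [hm0, add_zero]; exact hp
  have hMmTop : D = ⊤ → Mm = LinearMap.ker (J.toLinearMap + LinearMap.id) := by
    intro htop
    apply le_antisymm
    · intro x hx
      simp only [LinearMap.mem_ker, LinearMap.add_apply, LinearMap.id_apply,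
        ContinuousLinearMap.coe_coe, add_eq_zero_iff_eq_neg]
      exact hMm x hx
    · intro x hx
      have hJx : J x = -x := by
        simpa [LinearMap.mem_ker, LinearMap.add_apply, add_eq_zero_iff_eq_neg] using hx
      have hxD : x ∈ Mp ⊔ Mm := by rw [← hD, htop]; trivial
      obtain ⟨p, hp, m, hm, rfl⟩ := Submodule.mem_sup.1 hxD
      have h1 : p + -m = -(p + m) := by
        rw [← hJx, map_add, hMp p hp, hMm m hm]
      have h1' : p + -m = -p + -m := by rw [h1, neg_add]
      have hpn : p = -p := add_right_cancel h1'
      have h2 : (2 : ℂ) • p = 0 := by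
        have hpp0 : p + p = 0 := by nth_rewrite 1 [hpn]; try simp
        rw [two_smul, hpp0]
      have hp0 : p = 0 := by
        rcases smul_eq_zero.1 h2 with h | h
        · norm_num at h
        · exact h
      rw [hp0, zero_add]; exact hm
  -- conjunct 2, backward
  have htopOf : Mp = LinearMap.ker (J.toLinearMap - LinearMap.id) →
      Mm = LinearMap.ker (J.toLinearMap + LinearMap.id) → D = ⊤ := by
    intro h1 h2
    rw [hD, eq_top_iff]
    intro f _
    have hfp : (2⁻¹ : ℂ) • (f + J f) ∈ Mp := by
      rw [h1]
      simp only [LinearMap.mem_ker, LinearMap.sub_apply, LinearMap.id_apply,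
        ContinuousLinearMap.coe_coe, sub_eq_zero]
      exact hplusJ f
    have hfm : (2⁻¹ : ℂ) • (f - J f) ∈ Mm := by
      rw [h2]
      simp only [LinearMap.mem_ker, LinearMap.add_apply, LinearMap.id_apply,
        ContinuousLinearMap.coe_coe, add_eq_zero_iff_eq_neg]
      exact hminusJ f
    exact hsplit f ▸ Submodule.add_mem_sup hfp hfm
  -- maximality given D = ⊤
  have hmaxp : D = ⊤ → ∀ L' : Submodule ℂ H,
      (∀ f ∈ L', f ≠ 0 → 0 < (inner ℂ (J f) f : ℂ).re) →
      Mp.map (LinearMap.id + T₀) ≤ L' → Mp.map (LinearMap.id + T₀) = L' := by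
    intro htop L' hL' hle
    refine le_antisymm hle (fun f hf => ?_)
    set p := (2⁻¹ : ℂ) • (f + J f) with hp
    have hpMp : p ∈ Mp := by
      rw [hMpTop htop]
      simp only [LinearMap.mem_ker, LinearMap.sub_apply, LinearMap.id_apply,
        ContinuousLinearMap.coe_coe, sub_eq_zero]
      exact hplusJ f
    have hg : p + T₀ p ∈ Mp.map (LinearMap.id + T₀) := (hmemLp _).2 ⟨p, hpMp, rfl⟩
    have hh : f - (p + T₀ p) ∈ L' := L'.sub_mem hf (hle hg)
    have hJh : J (f - (p + T₀ p)) = -(f - (p + T₀ p)) := by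
      rw [map_sub, map_add, hplusJ f, hTp p hpMp, hp]
      module
    have hh0 : f - (p + T₀ p) = 0 := by
      by_contra hne
      have hpos' := hL' _ hh hne
      have hle0 : (inner ℂ (J (f - (p + T₀ p))) (f - (p + T₀ p)) : ℂ).re ≤ 0 := by
        rw [hJh, inner_neg_left, Complex.neg_re, aux_re_inner_self]
        nlinarith [sq_nonneg ‖f - (p + T₀ p)‖]
      linarith
    have : f = p + T₀ p := by rwa [sub_eq_zero] at hh0
    exact this ▸ hg
  have hmaxm : D = ⊤ → ∀ L' : Submodule ℂ H,
      (∀ f ∈ L', f ≠ 0 → (inner ℂ (J f) f : ℂ).re < 0) →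
      Mm.map (LinearMap.id + T₀) ≤ L' → Mm.map (LinearMap.id + T₀) = L' := by
    intro htop L' hL' hle
    refine le_antisymm hle (fun f hf => ?_)
    set q := (2⁻¹ : ℂ) • (f - J f) with hq
    have hqMm : q ∈ Mm := by
      rw [hMmTop htop]
      simp only [LinearMap.mem_ker, LinearMap.add_apply, LinearMap.id_apply,
        ContinuousLinearMap.coe_coe, add_eq_zero_iff_eq_neg]
      exact hminusJ f
    have hg : q + T₀ q ∈ Mm.map (LinearMap.id + T₀) := (hmemLm _).2 ⟨q, hqMm, rfl⟩
    have hh : f - (q + T₀ q) ∈ L' := L'.sub_mem hf (hle hg)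
    have hJh : J (f - (q + T₀ q)) = f - (q + T₀ q) := by
      rw [map_sub, map_add, hminusJ f, hTm q hqMm, hq]
      module
    have hh0 : f - (q + T₀ q) = 0 := by
      by_contra hne
      have hneg' := hL' _ hh hne
      have hge0 : 0 ≤ (inner ℂ (J (f - (q + T₀ q))) (f - (q + T₀ q)) : ℂ).re := by
        rw [hJh, aux_re_inner_self]
        positivity
      linarith
    have : f = q + T₀ q := by rwa [sub_eq_zero] at hh0
    exact this ▸ hg
  -- maximality implies D = ⊤
  have hfwd : (∀ L' : Submodule ℂ H, (∀ f ∈ L', f ≠ 0 → 0 < (inner ℂ (J f) f : ℂ).re) →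
        Mp.map (LinearMap.id + T₀) ≤ L' → Mp.map (LinearMap.id + T₀) = L') →
      (∀ L' : Submodule ℂ H, (∀ f ∈ L', f ≠ 0 → (inner ℂ (J f) f : ℂ).re < 0) →
        Mm.map (LinearMap.id + T₀) ≤ L' → Mm.map (LinearMap.id + T₀) = L') →
      D = ⊤ := by
    intro hmp hmm
    apply htopOf
    · -- Mp = ker (J - 1)
      apply le_antisymm
      · intro x hx
        simp only [LinearMap.mem_ker, LinearMap.sub_apply, LinearMap.id_apply,
          ContinuousLinearMap.coe_coe, sub_eq_zero]
        exact hMp x hx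
      · intro e he
        have hJe : J e = e := by
          simpa [LinearMap.mem_ker, LinearMap.sub_apply, sub_eq_zero] using he
        by_contra heMp
        haveI : CompleteSpace Mp := hMpc.completeSpace_coe
        set e' := e - (Mp.orthogonalProjectionOnto e : H) with he'
        have he'o : e' ∈ Mpᗮ := Submodule.sub_starProjection_mem_orthogonal (K := Mp) e
        have he'J : J e' = e' := by
          rw [he', map_sub, hJe, hMp _ (Mp.orthogonalProjectionOnto e).2]
        have he'0 : e' ≠ 0 := by
          intro h0
          apply heMp
          have h1 : e = (Mp.orthogonalProjectionOnto e : H) := by rwa [sub_eq_zero] at h0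
          rw [h1]; exact (Mp.orthogonalProjectionOnto e).2
        set L' := Mp.map (LinearMap.id + T₀) ⊔ (ℂ ∙ e') with hL'
        have hL'pos : ∀ w ∈ L', w ≠ 0 → 0 < (inner ℂ (J w) w : ℂ).re := by
          intro w hw hne
          obtain ⟨g, hg, z, hz, rfl⟩ := Submodule.mem_sup.1 hw
          obtain ⟨x, hx, rfl⟩ := (hmemLp g).1 hg
          obtain ⟨c, rfl⟩ := Submodule.mem_span_singleton.1 hz
          have ha : J (x + c • e') = x + c • e' := by
            rw [map_add, hMp x hx, map_smul, he'J]
          have harr : x + T₀ x + c • e' = (x + c • e') + T₀ x := by abel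
          have hre : (inner ℂ (J (x + T₀ x + c • e')) (x + T₀ x + c • e') : ℂ).re
              = ‖x + c • e'‖ ^ 2 - ‖T₀ x‖ ^ 2 := by
            rw [harr, aux_key J hJsa _ _ ha (hTp x hx)]
          have h0 : (inner ℂ x (c • e') : ℂ) = 0 := by
            rw [inner_smul_right, he'o x hx, mul_zero]
          have hpyth : ‖x + c • e'‖ ^ 2 = ‖x‖ ^ 2 + ‖c • e'‖ ^ 2 := by
            have h := @norm_add_sq ℂ _ _ _ _ x (c • e')
            rw [h0] at h
            simpa using h
          rcases eq_or_ne x 0 with rfl | hx0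
          · have hc0 : c • e' ≠ 0 := by simpa using hne
            rw [hre, hpyth]
            simp only [map_zero, norm_zero]
            have : 0 < ‖c • e'‖ := norm_pos_iff.2 hc0
            nlinarith
          · have h := hsc x (hMpD hx) hx0
            rw [hre, hpyth]
            nlinarith [norm_nonneg (c • e'), norm_nonneg (T₀ x), norm_nonneg x]
        have heq := hmp L' hL'pos le_sup_left
        have he'mem : e' ∈ Mp.map (LinearMap.id + T₀) := by
          rw [heq, hL']
          exact Submodule.mem_sup_right (Submodule.mem_span_singleton_self e')
        obtain ⟨x, hx, hxe⟩ := (hmemLp e').1 he'mem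
        have h1 : (inner ℂ x e' : ℂ) = 0 := he'o x hx
        rw [← hxe, inner_add_right, aux_orth J hJsa x (T₀ x) (hMp x hx) (hTp x hx),
          add_zero, inner_self_eq_zero] at h1
        apply he'0
        rw [← hxe, h1, map_zero, add_zero]
    · -- Mm = ker (J + 1)
      apply le_antisymm
      · intro x hx
        simp only [LinearMap.mem_ker, LinearMap.add_apply, LinearMap.id_apply,
          ContinuousLinearMap.coe_coe, add_eq_zero_iff_eq_neg]
        exact hMm x hx
      · intro e he
        have hJe : J e = -e := by
          simpa [LinearMap.mem_ker, LinearMap.add_apply, add_eq_zero_iff_eq_neg] using he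
        by_contra heMm
        haveI : CompleteSpace Mm := hMmc.completeSpace_coe
        set e' := e - (Mm.orthogonalProjectionOnto e : H) with he'
        have he'o : e' ∈ Mmᗮ := Submodule.sub_starProjection_mem_orthogonal (K := Mm) e
        have he'J : J e' = -e' := by
          rw [he', map_sub, hJe, hMm _ (Mm.orthogonalProjectionOnto e).2, neg_sub_neg, neg_sub]
        have he'0 : e' ≠ 0 := by
          intro h0
          apply heMm
          have h1 : e = (Mm.orthogonalProjectionOnto e : H) := by rwa [sub_eq_zero] at h0
          rw [h1]; exact (Mm.orthogonalProjectionOnto e).2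
        set L' := Mm.map (LinearMap.id + T₀) ⊔ (ℂ ∙ e') with hL'
        have hL'neg : ∀ w ∈ L', w ≠ 0 → (inner ℂ (J w) w : ℂ).re < 0 := by
          intro w hw hne
          obtain ⟨g, hg, z, hz, rfl⟩ := Submodule.mem_sup.1 hw
          obtain ⟨x, hx, rfl⟩ := (hmemLm g).1 hg
          obtain ⟨c, rfl⟩ := Submodule.mem_span_singleton.1 hz
          have hb : J (x + c • e') = -(x + c • e') := by
            rw [map_add, hMm x hx, map_smul, he'J, smul_neg, neg_add]
          have harr : x + T₀ x + c • e' = T₀ x + (x + c • e') := by abel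
          have hre : (inner ℂ (J (x + T₀ x + c • e')) (x + T₀ x + c • e') : ℂ).re
              = ‖T₀ x‖ ^ 2 - ‖x + c • e'‖ ^ 2 := by
            rw [harr, aux_key J hJsa _ _ (hTm x hx) hb]
          have h0 : (inner ℂ x (c • e') : ℂ) = 0 := by
            rw [inner_smul_right, he'o x hx, mul_zero]
          have hpyth : ‖x + c • e'‖ ^ 2 = ‖x‖ ^ 2 + ‖c • e'‖ ^ 2 := by
            have h := @norm_add_sq ℂ _ _ _ _ x (c • e')
            rw [h0] at h
            simpa using h
          rcases eq_or_ne x 0 with rfl | hx0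
          · have hc0 : c • e' ≠ 0 := by simpa using hne
            rw [hre, hpyth]
            simp only [map_zero, norm_zero]
            have : 0 < ‖c • e'‖ := norm_pos_iff.2 hc0
            nlinarith
          · have h := hsc x (hMmD hx) hx0
            rw [hre, hpyth]
            nlinarith [norm_nonneg (c • e'), norm_nonneg (T₀ x), norm_nonneg x]
        have heq := hmm L' hL'neg le_sup_left
        have he'mem : e' ∈ Mm.map (LinearMap.id + T₀) := by
          rw [heq, hL']
          exact Submodule.mem_sup_right (Submodule.mem_span_singleton_self e')
        obtain ⟨x, hx, hxe⟩ := (hmemLm e').1 he'mem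
        have h1 : (inner ℂ x e' : ℂ) = 0 := he'o x hx
        have h2 : (inner ℂ x (T₀ x) : ℂ) = 0 := by
          rw [← inner_conj_symm, aux_orth J hJsa (T₀ x) x (hTm x hx) (hMm x hx), map_zero]
        rw [← hxe, inner_add_right, h2, add_zero, inner_self_eq_zero] at h1
        apply he'0
        rw [← hxe, h1, map_zero, add_zero]
  refine ⟨⟨fun h => hfwd h.2.1 h.2.2.2, fun htop => ⟨hpos, hmaxp htop, hneg, hmaxm htop⟩⟩,
    ⟨fun htop => ⟨hMpTop htop, hMmTop htop⟩, fun h => htopOf h.1 h.2⟩, fun htop => ?_⟩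
  have hDall : ∀ f : H, f ∈ D := fun f => by rw [htop]; trivial
  exact ⟨fun f g => hsymm f (hDall f) g (hDall g), fun f hf => hsc f (hDall f) hf⟩
end

section
/- Let T : ℋ → ℋ be a bounded self-adjoint operator with ‖T‖ ≤ 1 and J T = −T J. Then I + T and I − T are positive operators, and J ∘ √(I + T) = √(I − T) ∘ J, where √· denotes the unique positive square root of a positive self-adjoint operator. -/
open scoped InnerProductSpace ComplexOrder

set_option synthInstance.maxHeartbeats 1000000
set_option maxHeartbeats 1000000

lemma aux_pos {H : Type*} [NormedAddCommGroup H] [InnerProductSpace ℂ H] [CompleteSpace H]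
    (T : H →L[ℂ] H) (hTsa : IsSelfAdjoint T) (hTnorm : ‖T‖ ≤ 1) :
    (1 + T).IsPositive := by
  refine ContinuousLinearMap.isPositive_def'.mpr ⟨(IsSelfAdjoint.one _).add hTsa, fun x => ?_⟩
  have h1 : |RCLike.re (⟪T x, x⟫_ℂ)| ≤ ‖x‖ * ‖x‖ := by
    calc |RCLike.re (⟪T x, x⟫_ℂ)| ≤ ‖⟪T x, x⟫_ℂ‖ := RCLike.abs_re_le_norm _
      _ ≤ ‖T x‖ * ‖x‖ := norm_inner_le_norm _ _
      _ ≤ (‖T‖ * ‖x‖) * ‖x‖ := by gcongr; exact T.le_opNorm x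
      _ ≤ (1 * ‖x‖) * ‖x‖ := by gcongr
      _ = ‖x‖ * ‖x‖ := by ring
  have h3 := abs_le.mp h1
  have h2 : ⟪(1 + T) x, x⟫_ℂ = ⟪x, x⟫_ℂ + ⟪T x, x⟫_ℂ := by
    simp [inner_add_left]
  rw [ContinuousLinearMap.reApplyInnerSelf_apply, h2, map_add]
  have h4 : RCLike.re (⟪x, x⟫_ℂ : ℂ) = ‖x‖ * ‖x‖ :=
    inner_self_eq_norm_mul_norm (𝕜 := ℂ) x
  linarith

/-- If `T` is a self-adjoint contraction anticommuting with `J`, then `I ± T`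
are positive and `J √(I+T) = √(I−T) J`, where the square roots are the (unique) positive square
roots of `I + T` and `I − T`. -/
theorem stmt_7
    {H : Type*} [NormedAddCommGroup H] [InnerProductSpace ℂ H] [CompleteSpace H]
    (J : H →L[ℂ] H) (hJsa : IsSelfAdjoint J) (hJ2 : J ∘L J = 1)
    (T : H →L[ℂ] H) (hTsa : IsSelfAdjoint T) (hTnorm : ‖T‖ ≤ 1)
    (hanti : J ∘L T = -(T ∘L J)) :
    (1 + T).IsPositive ∧ (1 - T).IsPositive ∧
    ∀ S₁ S₂ : H →L[ℂ] H, S₁.IsPositive → S₂.IsPositive →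
      S₁ ∘L S₁ = 1 + T → S₂ ∘L S₂ = 1 - T → J ∘L S₁ = S₂ ∘L J := by
  have hpos1 : (1 + T).IsPositive := aux_pos T hTsa hTnorm
  have hpos2 : (1 - T).IsPositive := by
    have := aux_pos (-T) hTsa.neg (by simpa using hTnorm)
    simpa [sub_eq_add_neg] using this
  refine ⟨hpos1, hpos2, fun S₁ S₂ hS₁ hS₂ hsq₁ hsq₂ => ?_⟩
  have hJ2' : J * J = 1 := hJ2
  have hanti' : J * T = -(T * J) := hanti
  have hsq₁' : S₁ * S₁ = 1 + T := hsq₁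
  have hJadj : ContinuousLinearMap.adjoint J = J := hJsa
  have hconj : (J * S₁ * J).IsPositive := by
    have := hS₁.conj_adjoint J
    rw [hJadj] at this
    rw [mul_assoc]
    exact this
  have hsq : (J * S₁ * J) * (J * S₁ * J) = 1 - T := by
    have e1 : (J * S₁ * J) * (J * S₁ * J) = J * (S₁ * S₁) * J := by
      calc (J * S₁ * J) * (J * S₁ * J) = J * S₁ * (J * J) * S₁ * J := by
            simp only [mul_assoc]
        _ = J * (S₁ * S₁) * J := by rw [hJ2']; simp only [mul_one, mul_assoc]
    rw [e1, hsq₁', mul_add, mul_one, add_mul, hJ2', hanti', neg_mul,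
      mul_assoc, hJ2', mul_one, sub_eq_add_neg]
  have h1 : CFC.sqrt (1 - T) = J * S₁ * J :=
    CFC.sqrt_unique hsq ((ContinuousLinearMap.nonneg_iff_isPositive _).mpr hconj)
  have h2 : CFC.sqrt (1 - T) = S₂ :=
    CFC.sqrt_unique hsq₂ ((ContinuousLinearMap.nonneg_iff_isPositive _).mpr hS₂)
  have key : J * S₁ * J = S₂ := h1 ▸ h2
  have : J * S₁ = S₂ * J := by
    calc J * S₁ = J * S₁ * (J * J) := by rw [hJ2', mul_one]
      _ = (J * S₁ * J) * J := by simp only [mul_assoc]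
      _ = S₂ * J := by rw [key]
  exact this
end

section
/- Let T : ℋ → ℋ be a bounded self-adjoint operator with ‖T‖ ≤ 1 and J T = −T J, and let D be a closed subspace of ℋ with J(D) = D. Let Q₁ and Q₂ be the orthogonal projections onto the orthogonal complements of √(I+T)(D) and √(I−T)(D), respectively. Then J Q₁ = Q₂ J, and the operators T_μ := T − √(I+T) Q₁ √(I+T) and T_M := T + √(I−T) Q₂ √(I−T) satisfy J T_μ = −T_M J. -/
open ContinuousLinearMap in
set_option synthInstance.maxHeartbeats 1000000 in
/-- Uniqueness of positive square roots. -/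
private lemma pos_sq_inj {H : Type*} [NormedAddCommGroup H] [InnerProductSpace ℂ H]
    [CompleteSpace H] (a b : H →L[ℂ] H) (ha : a.IsPositive) (hb : b.IsPositive)
    (h : a ∘L a = b ∘L b) : a = b := by
  rw [← ContinuousLinearMap.nonneg_iff_isPositive] at ha hb
  have h' : a * a = b * b := h
  calc a = CFC.sqrt (a * a) := (CFC.sqrt_mul_self a ha).symm
    _ = CFC.sqrt (b * b) := by rw [h']
    _ = b := CFC.sqrt_mul_self b hb

/-- Two self-adjoint idempotents with the same range are equal. -/
private lemma proj_eq {H : Type*} [NormedAddCommGroup H] [InnerProductSpace ℂ H]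
    [CompleteSpace H] (p q : H →L[ℂ] H) (hp : IsSelfAdjoint p) (hq : IsSelfAdjoint q)
    (hpi : p ∘L p = p) (hqi : q ∘L q = q)
    (hr : LinearMap.range (p : H →ₗ[ℂ] H) = LinearMap.range (q : H →ₗ[ℂ] H)) : p = q := by
  have key : ∀ (p q : H →L[ℂ] H), q ∘L q = q →
      LinearMap.range (p : H →ₗ[ℂ] H) ≤ LinearMap.range (q : H →ₗ[ℂ] H) → q ∘L p = p := by
    intro p q hqq hle
    ext x
    obtain ⟨y, hy⟩ := hle ⟨x, rfl⟩
    simp only [ContinuousLinearMap.coe_coe] at hy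
    have : q (q y) = q y := congrFun (congrArg DFunLike.coe hqq) y
    simp only [ContinuousLinearMap.comp_apply, ← hy, this]
  have h1 : q ∘L p = p := key p q hqi hr.le
  have h2 : p ∘L q = q := key q p hpi hr.ge
  have h3 : q * p = q := by
    have : star (p * q) = star q := congrArg star h2
    rwa [star_mul, hp.star_eq, hq.star_eq] at this
  rw [← h1]; exact h3

/-- With `S₁ = √(I+T)`, `S₂ = √(I−T)` and `Q₁, Q₂` the orthogonal projections
onto the orthogonal complements of `S₁(D)` and `S₂(D)` respectively, one has `J Q₁ = Q₂ J` and
the hard and soft extensions `T_μ = T − S₁Q₁S₁`, `T_M = T + S₂Q₂S₂` satisfy `J T_μ = −T_M J`. -/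
theorem stmt_8
    {H : Type*} [NormedAddCommGroup H] [InnerProductSpace ℂ H] [CompleteSpace H]
    (J : H →L[ℂ] H) (hJsa : IsSelfAdjoint J) (hJ2 : J ∘L J = 1)
    (T : H →L[ℂ] H) (hTsa : IsSelfAdjoint T) (hTnorm : ‖T‖ ≤ 1)
    (hanti : J ∘L T = -(T ∘L J))
    (D : Submodule ℂ H) (hDc : IsClosed (D : Set H))
    (hJD : D.map J.toLinearMap = D)
    (S₁ S₂ : H →L[ℂ] H) (hS₁pos : S₁.IsPositive) (hS₂pos : S₂.IsPositive)
    (hS₁sq : S₁ ∘L S₁ = 1 + T) (hS₂sq : S₂ ∘L S₂ = 1 - T)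
    (Q₁ Q₂ : H →L[ℂ] H)
    (hQ₁sa : IsSelfAdjoint Q₁) (hQ₁idem : Q₁ ∘L Q₁ = Q₁)
    (hQ₁range : LinearMap.range (Q₁ : H →ₗ[ℂ] H) = (D.map S₁.toLinearMap)ᗮ)
    (hQ₂sa : IsSelfAdjoint Q₂) (hQ₂idem : Q₂ ∘L Q₂ = Q₂)
    (hQ₂range : LinearMap.range (Q₂ : H →ₗ[ℂ] H) = (D.map S₂.toLinearMap)ᗮ) :
    J ∘L Q₁ = Q₂ ∘L J ∧
    J ∘L (T - S₁ ∘L Q₁ ∘L S₁) = -((T + S₂ ∘L Q₂ ∘L S₂) ∘L J) := by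
  have hJadj : ContinuousLinearMap.adjoint J = J :=
    (ContinuousLinearMap.isSelfAdjoint_iff' ).mp hJsa
  have hJJ : ∀ x, J (J x) = x := fun x => by
    have := congrFun (congrArg DFunLike.coe hJ2) x
    simpa using this
  have hJinner : ∀ x y : H, inner ℂ (J x) (J y) = (inner ℂ x y : ℂ) := fun x y => by
    rw [← ContinuousLinearMap.adjoint_inner_left, hJadj]
    simp [hJJ]
  have hJT : ∀ x, J (T x) = -T (J x) := fun x => by
    have := congrFun (congrArg DFunLike.coe hanti) x
    simpa using this
  have hS₁app : ∀ x, S₁ (S₁ x) = x + T x := fun x => by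
    have := congrFun (congrArg DFunLike.coe hS₁sq) x
    simpa using this
  -- J S₁ J is positive with square 1 - T, hence equals S₂
  have hApos : (J ∘L S₁ ∘L J).IsPositive := by
    have := hS₁pos.conj_adjoint J
    rwa [hJadj, ← ContinuousLinearMap.comp_assoc] at this
  have hAsq : (J ∘L S₁ ∘L J) ∘L (J ∘L S₁ ∘L J) = 1 - T := by
    ext x
    simp only [ContinuousLinearMap.comp_apply, hJJ, hS₁app, map_add, hJT, hJJ,
      ContinuousLinearMap.sub_apply, ContinuousLinearMap.one_apply]
    abel
  have hA : J ∘L S₁ ∘L J = S₂ := pos_sq_inj _ _ hApos hS₂pos (by rw [hAsq, hS₂sq])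
  have hJS : ∀ x, J (S₁ x) = S₂ (J x) := fun x => by
    have := congrFun (congrArg DFunLike.coe hA) (J x)
    simpa [hJJ] using this
  -- J maps orthogonal complements to orthogonal complements
  have horth : ∀ K : Submodule ℂ H,
      Kᗮ.map J.toLinearMap = (K.map J.toLinearMap)ᗮ := by
    intro K
    ext x
    simp only [Submodule.mem_map, Submodule.mem_orthogonal]
    constructor
    · rintro ⟨y, hy, rfl⟩ u ⟨v, hv, rfl⟩
      rw [ContinuousLinearMap.coe_coe, hJinner]
      exact hy v hv
    · intro hx
      refine ⟨J x, fun v hv => ?_, hJJ x⟩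
      have h0 := hx (J v) ⟨v, hv, rfl⟩
      rw [← hJinner v (J x), hJJ]
      simpa using h0
  -- range of J Q₁ J
  have hJsurj : LinearMap.range (J : H →ₗ[ℂ] H) = ⊤ := by
    rw [LinearMap.range_eq_top]
    exact fun x => ⟨J x, hJJ x⟩
  have hmapS : (D.map S₁.toLinearMap).map J.toLinearMap = D.map S₂.toLinearMap := by
    rw [← Submodule.map_comp, show (J : H →ₗ[ℂ] H).comp S₁.toLinearMap
        = (S₂ : H →ₗ[ℂ] H).comp J.toLinearMap from LinearMap.ext fun x => hJS x,
      Submodule.map_comp, hJD]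
  have hrange : LinearMap.range ((J ∘L Q₁ ∘L J : H →L[ℂ] H) : H →ₗ[ℂ] H) = (D.map S₂.toLinearMap)ᗮ := by
    have h1 : LinearMap.range ((J ∘L Q₁ ∘L J : H →L[ℂ] H) : H →ₗ[ℂ] H)
        = (LinearMap.range ((Q₁ ∘L J : H →L[ℂ] H) : H →ₗ[ℂ] H)).map J.toLinearMap := by
      ext x
      simp only [LinearMap.mem_range, Submodule.mem_map, ContinuousLinearMap.coe_coe,
        ContinuousLinearMap.comp_apply]
      constructor
      · rintro ⟨y, rfl⟩; exact ⟨Q₁ (J y), ⟨y, rfl⟩, rfl⟩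
      · rintro ⟨_, ⟨y, rfl⟩, rfl⟩; exact ⟨y, rfl⟩
    have h2 : LinearMap.range ((Q₁ ∘L J : H →L[ℂ] H) : H →ₗ[ℂ] H) = LinearMap.range (Q₁ : H →ₗ[ℂ] H) := by
      ext x
      simp only [LinearMap.mem_range, ContinuousLinearMap.coe_coe,
        ContinuousLinearMap.comp_apply]
      constructor
      · rintro ⟨y, rfl⟩; exact ⟨J y, rfl⟩
      · rintro ⟨y, rfl⟩; exact ⟨J y, by rw [hJJ]⟩
    rw [h1, h2, hQ₁range, horth, hmapS]
  -- J Q₁ J = Q₂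
  have hQsa : IsSelfAdjoint (J ∘L Q₁ ∘L J) := by
    have := hQ₁sa.adjoint_conj J
    rwa [hJadj, ← ContinuousLinearMap.comp_assoc] at this
  have hQidem : (J ∘L Q₁ ∘L J) ∘L (J ∘L Q₁ ∘L J) = J ∘L Q₁ ∘L J := by
    ext x
    have hq : Q₁ (Q₁ (J x)) = Q₁ (J x) := congrFun (congrArg DFunLike.coe hQ₁idem) (J x)
    simp [ContinuousLinearMap.comp_apply, hJJ, hq]
  have hQ : J ∘L Q₁ ∘L J = Q₂ := proj_eq _ _ hQsa hQ₂sa hQidem hQ₂idem (hrange.trans hQ₂range.symm)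
  have hJQ : ∀ x, J (Q₁ x) = Q₂ (J x) := fun x => by
    have := congrFun (congrArg DFunLike.coe hQ) (J x)
    simpa [hJJ] using this
  constructor
  · ext x; simp [ContinuousLinearMap.comp_apply, hJQ]
  · ext x
    simp only [ContinuousLinearMap.comp_apply, ContinuousLinearMap.sub_apply,
      ContinuousLinearMap.add_apply, ContinuousLinearMap.neg_apply, map_sub,
      hJT, hJS, hJQ]
    abel
end

section
/- Let T_μ and T_M be bounded self-adjoint operators on ℋ with ‖T_μ‖ ≤ 1, ‖T_M‖ ≤ 1, T_μ ≤ T_M (i.e. T_M − T_μ is positive), and J T_μ J = −T_M. Let S := √(T_M − T_μ), let 𝔐 be the closure of the range of T_M − T_μ, and let P be the orthogonal projection onto 𝔐. Let X be a bounded self-adjoint operator with 0 ≤ X ≤ I and X P = X = P X. Then the operator T := T_μ + S X S satisfies J T = −T J if and only if X + J X J = P. -/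
set_option maxHeartbeats 1000000
set_option synthInstance.maxHeartbeats 1000000

open scoped InnerProductSpace

/-- In the Krein–Arlinskii parametrization `T = T_μ + S X S`
(`S = √(T_M − T_μ)`, `0 ≤ X ≤ I` supported on `𝔐 = cl (range (T_M − T_μ))` with orthogonal
projection `P` onto `𝔐`), the operator `T` anticommutes with `J` iff `X + J X J = P`. -/
theorem stmt_10
    {H : Type*} [NormedAddCommGroup H] [InnerProductSpace ℂ H] [CompleteSpace H]
    (J : H →L[ℂ] H) (hJsa : IsSelfAdjoint J) (hJ2 : J ∘L J = 1)
    (Tmu TM : H →L[ℂ] H)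
    (hmusa : IsSelfAdjoint Tmu) (hMsa : IsSelfAdjoint TM)
    (hmunorm : ‖Tmu‖ ≤ 1) (hMnorm : ‖TM‖ ≤ 1)
    (hle : (TM - Tmu).IsPositive)
    (hJmu : J ∘L Tmu ∘L J = -TM)
    (S : H →L[ℂ] H) (hSpos : S.IsPositive) (hSsq : S ∘L S = TM - Tmu)
    (P : H →L[ℂ] H) (hPsa : IsSelfAdjoint P) (hPidem : P ∘L P = P)
    (hPrange : LinearMap.range (P : H →ₗ[ℂ] H) = (LinearMap.range ((TM - Tmu : H →L[ℂ] H) : H →ₗ[ℂ] H)).topologicalClosure)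
    (X : H →L[ℂ] H) (hXsa : IsSelfAdjoint X)
    (hXpos : X.IsPositive) (hXcontr : (1 - X).IsPositive)
    (hXP : X ∘L P = X) (hPX : P ∘L X = X) :
    J ∘L (Tmu + S ∘L X ∘L S) = -((Tmu + S ∘L X ∘L S) ∘L J) ↔
      X + J ∘L X ∘L J = P := by
  simp only [← ContinuousLinearMap.mul_def] at hJ2 hJmu hSsq hPidem hXP hPX ⊢
  simp only [← mul_assoc] at hJmu ⊢
  set D : H →L[ℂ] H := TM - Tmu with hD
  have hSsa : IsSelfAdjoint S := hSpos.isSelfAdjoint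
  have hDsa : IsSelfAdjoint D := hle.isSelfAdjoint
  have hSsym : ∀ x y : H, ⟪S x, y⟫_ℂ = ⟪x, S y⟫_ℂ := fun x y => hSsa.isSymmetric x y
  have hDsym : ∀ x y : H, ⟪D x, y⟫_ℂ = ⟪x, D y⟫_ℂ := fun x y => hDsa.isSymmetric x y
  -- J TM J = -Tmu
  have hJTM : J * TM * J = -Tmu := by
    have h1 : J * (J * Tmu * J) * J = J * (-TM) * J := by rw [hJmu]
    have h2 : J * (J * Tmu * J) * J = (J * J) * Tmu * (J * J) := by noncomm_ring
    have h3 : J * (-TM) * J = -(J * TM * J) := by noncomm_ring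
    rw [h2, hJ2, one_mul, mul_one, h3] at h1
    rw [h1, neg_neg]
  have hJD : J * D * J = D := by
    have h1 : J * D * J = J * TM * J - J * Tmu * J := by rw [hD]; noncomm_ring
    rw [h1, hJTM, hJmu, hD]
    abel
  have hJDc : J * D = D * J := by
    conv_lhs => rw [← mul_one (J * D), ← hJ2]
    rw [← mul_assoc, hJD]
  -- J S = S J via uniqueness of positive square root
  have hJadj : ContinuousLinearMap.adjoint J = J := hJsa.adjoint_eq
  have hJSJpos : (J * S * J).IsPositive := by
    have := hSpos.conj_adjoint J
    rw [hJadj] at this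
    simpa only [← ContinuousLinearMap.mul_def, ← mul_assoc] using this
  have hJSJsq : (J * S * J) * (J * S * J) = D := by
    calc (J * S * J) * (J * S * J) = J * (S * ((J * J) * S)) * J := by noncomm_ring
    _ = J * (S * S) * J := by rw [hJ2, one_mul]
    _ = D := by rw [hSsq]; exact hJD
  have hJSJ0 : (0 : H →L[ℂ] H) ≤ J * S * J := (J * S * J).nonneg_iff_isPositive.mpr hJSJpos
  have hS0 : (0 : H →L[ℂ] H) ≤ S := S.nonneg_iff_isPositive.mpr hSpos
  have hsq1 : CFC.sqrt ((J * S * J) * (J * S * J)) = J * S * J := CFC.sqrt_unique rfl hJSJ0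
  have hsq2 : CFC.sqrt ((J * S * J) * (J * S * J)) = S :=
    CFC.sqrt_unique (by rw [hSsq, hJSJsq]) hS0
  have hJSJ : J * S * J = S := by rw [← hsq1, hsq2]
  have hJS : J * S = S * J := by
    conv_lhs => rw [← mul_one (J * S), ← hJ2]
    rw [← mul_assoc, hJSJ]
  -- idempotents fix their ranges
  have hfix : ∀ (Q : H →L[ℂ] H), Q * Q = Q → ∀ x ∈ LinearMap.range (Q : H →ₗ[ℂ] H), Q x = x := by
    rintro Q hQ x ⟨y, rfl⟩
    have := congrFun (congrArg (DFunLike.coe) hQ) y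
    simpa [ContinuousLinearMap.mul_apply] using this
  -- S maps into range P
  have hSmem : ∀ f, S f ∈ LinearMap.range (P : H →ₗ[ℂ] H) := by
    intro f
    rw [hPrange]
    haveI : CompleteSpace ((LinearMap.range (D : H →ₗ[ℂ] H)).topologicalClosure) :=
      (LinearMap.range (D : H →ₗ[ℂ] H)).isClosed_topologicalClosure.completeSpace_coe
    obtain ⟨u, hu, v, hv, huv⟩ :=
      ((LinearMap.range (D : H →ₗ[ℂ] H)).topologicalClosure).exists_add_mem_mem_orthogonal (S f)
    have hDv : D v = 0 := by
      have h1 : ∀ g, ⟪g, D v⟫_ℂ = 0 := by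
        intro g
        have h2 : ⟪D g, v⟫_ℂ = 0 := by
          refine hv (D g) ?_
          exact (LinearMap.range (D : H →ₗ[ℂ] H)).le_topologicalClosure ⟨g, rfl⟩
        rw [← hDsym g v]
        exact h2
      have := h1 (D v)
      rwa [inner_self_eq_zero] at this
    have hSv : S v = 0 := by
      have h1 : ⟪S v, S v⟫_ℂ = 0 := by
        have hSSv : S (S v) = D v := by
          have := congrFun (congrArg (DFunLike.coe) hSsq) v
          simpa [ContinuousLinearMap.mul_apply] using this
        calc ⟪S v, S v⟫_ℂ = ⟪v, S (S v)⟫_ℂ := hSsym v (S v)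
        _ = 0 := by rw [hSSv, hDv, inner_zero_right]
      rwa [inner_self_eq_zero] at h1
    have hvv : ⟪v, v⟫_ℂ = 0 := by
      have h1 : ⟪S f, v⟫_ℂ = ⟪u, v⟫_ℂ + ⟪v, v⟫_ℂ := by rw [huv, inner_add_left]
      have h2 : ⟪u, v⟫_ℂ = 0 := hv u hu
      have h3 : ⟪S f, v⟫_ℂ = 0 := by
        rw [hSsym f v, hSv, inner_zero_right]
      rw [h3, h2, zero_add] at h1
      exact h1.symm
    have hv0 : v = 0 := by rwa [inner_self_eq_zero] at hvv
    rw [huv, hv0, add_zero]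
    exact hu
  have hPS : P * S = S := by
    ext f
    simp only [ContinuousLinearMap.mul_apply]
    exact hfix P hPidem (S f) (hSmem f)
  have hSP : S * P = S := by
    have := congrArg star hPS
    rwa [star_mul, hPsa.star_eq, hSsa.star_eq] at this
  -- J P J = P
  have hMJ : ∀ x ∈ (LinearMap.range (D : H →ₗ[ℂ] H)).topologicalClosure,
      J x ∈ (LinearMap.range (D : H →ₗ[ℂ] H)).topologicalClosure := by
    intro x hx
    have hcoe : ((LinearMap.range (D : H →ₗ[ℂ] H)).topologicalClosure : Set H) =
        closure ((LinearMap.range (D : H →ₗ[ℂ] H) : Submodule ℂ H) : Set H) := rfl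
    have hx' : x ∈ closure ((LinearMap.range (D : H →ₗ[ℂ] H) : Submodule ℂ H) : Set H) := hx
    have h1 : J x ∈ closure (⇑J '' ((LinearMap.range (D : H →ₗ[ℂ] H) : Submodule ℂ H) : Set H)) :=
      image_closure_subset_closure_image J.continuous ⟨x, hx', rfl⟩
    have h2 : ⇑J '' ((LinearMap.range (D : H →ₗ[ℂ] H) : Submodule ℂ H) : Set H) ⊆
        ((LinearMap.range (D : H →ₗ[ℂ] H) : Submodule ℂ H) : Set H) := by
      rintro z ⟨w, ⟨y, rfl⟩, rfl⟩
      refine ⟨J y, ?_⟩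
      have := congrFun (congrArg (DFunLike.coe) hJDc) y
      simpa [ContinuousLinearMap.mul_apply] using this.symm
    exact closure_mono h2 h1
  have hMmem : ∀ x ∈ (LinearMap.range (D : H →ₗ[ℂ] H)).topologicalClosure, P x = x := by
    intro x hx
    exact hfix P hPidem x (by rw [hPrange]; exact hx)
  have hJPJ : J * P * J = P := by
    set Q : H →L[ℂ] H := J * P * J with hQ
    have hQsa : IsSelfAdjoint Q := by
      have := hPsa.conjugate J
      rwa [hJsa.star_eq] at this
    have hQidem : Q * Q = Q := by
      calc Q * Q = J * (P * ((J * J) * P)) * J := by rw [hQ]; noncomm_ring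
      _ = J * (P * P) * J := by rw [hJ2, one_mul]
      _ = Q := by rw [hPidem]
    have hrange : LinearMap.range (Q : H →ₗ[ℂ] H) = LinearMap.range (P : H →ₗ[ℂ] H) := by
      ext x
      constructor
      · rintro ⟨y, rfl⟩
        have h1 : Q y = J (P (J y)) := by
          simp [hQ, ContinuousLinearMap.mul_apply]
        rw [hPrange]
        rw [ContinuousLinearMap.coe_coe, h1]
        exact hMJ _ (by rw [← hPrange]; exact ⟨J y, rfl⟩)
      · intro hx
        have hxM : x ∈ (LinearMap.range (D : H →ₗ[ℂ] H)).topologicalClosure := by rwa [hPrange] at hx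
        refine ⟨x, ?_⟩
        have h1 : Q x = J (P (J x)) := by
          simp [hQ, ContinuousLinearMap.mul_apply]
        have h2 : P (J x) = J x := hMmem (J x) (hMJ x hxM)
        have h3 : J (J x) = x := by
          have := congrFun (congrArg (DFunLike.coe) hJ2) x
          simpa [ContinuousLinearMap.mul_apply] using this
        rw [ContinuousLinearMap.coe_coe, h1, h2, h3]
    have hQP : Q * P = P := by
      ext x
      simp only [ContinuousLinearMap.mul_apply]
      exact hfix Q hQidem (P x) (by rw [hrange]; exact ⟨x, rfl⟩)
    have hPQ : P * Q = Q := by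
      ext x
      simp only [ContinuousLinearMap.mul_apply]
      exact hfix P hPidem (Q x) (by rw [← hrange]; exact ⟨x, rfl⟩)
    have hPQ' : P * Q = P := by
      have := congrArg star hQP
      rwa [star_mul, hPsa.star_eq, hQsa.star_eq] at this
    rw [← hPQ]; exact hPQ'
  have hJP : J * P = P * J := by
    conv_lhs => rw [← mul_one (J * P), ← hJ2]
    rw [← mul_assoc, hJPJ]
  -- the central algebraic identity
  set Y : H →L[ℂ] H := X + J * X * J - P with hY
  have hE : J * (Tmu + S * X * S) * J + (Tmu + S * X * S) = S * Y * S := by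
    have h1 : J * (S * X * S) * J = S * (J * X * J) * S := by
      calc J * (S * X * S) * J = (J * S) * X * (S * J) := by noncomm_ring
      _ = (S * J) * X * (S * J) := by rw [hJS]
      _ = S * (J * (X * S)) * J := by noncomm_ring
      _ = S * ((J * (X * S)) * J) := by rw [mul_assoc]
      _ = S * ((J * X) * (S * J)) := by noncomm_ring
      _ = S * ((J * X) * (J * S)) := by rw [hJS]
      _ = S * (J * X * J) * S := by noncomm_ring
    have h2 : S * P * S = D := by rw [hSP, hSsq]
    have h3 : J * (Tmu + S * X * S) * J = J * Tmu * J + J * (S * X * S) * J := by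
      noncomm_ring
    rw [h3, hJmu, h1]
    have h4 : S * Y * S = S * X * S + S * (J * X * J) * S - S * P * S := by
      rw [hY]; noncomm_ring
    rw [h4, h2, hD]
    abel
  -- main equivalences
  have step1 : J * (Tmu + S * X * S) = -((Tmu + S * X * S) * J) ↔ S * Y * S = 0 := by
    constructor
    · intro h
      have h1 : J * (Tmu + S * X * S) * J = -((Tmu + S * X * S) * J) * J := by rw [h]
      have h2 : -((Tmu + S * X * S) * J) * J = -((Tmu + S * X * S) * (J * J)) := by
        noncomm_ring
      rw [h2, hJ2, mul_one] at h1
      rw [← hE, h1]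
      abel
    · intro h
      have h0 : J * (Tmu + S * X * S) * J + (Tmu + S * X * S) = 0 := by rw [hE, h]
      have h1 : J * (Tmu + S * X * S) * J = -(Tmu + S * X * S) :=
        eq_neg_of_add_eq_zero_left h0
      have h2 : J * (Tmu + S * X * S) * (J * J) = -(Tmu + S * X * S) * J := by
        rw [← mul_assoc, h1]
      rw [hJ2, mul_one] at h2
      rw [h2]
      noncomm_ring
  -- S Y S = 0 implies Y = 0
  have hYsa : IsSelfAdjoint Y := by
    rw [hY]
    have h1 : IsSelfAdjoint (J * X * J) := by
      have := hXsa.conjugate J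
      rwa [hJsa.star_eq] at this
    exact (hXsa.add h1).sub hPsa
  have hPY : P * Y = Y := by
    have h1 : P * (J * X * J) = J * X * J := by
      calc P * (J * X * J) = (P * J) * X * J := by noncomm_ring
      _ = (J * P) * X * J := by rw [hJP]
      _ = J * (P * X) * J := by noncomm_ring
      _ = J * X * J := by rw [hPX]
    calc P * Y = P * X + P * (J * X * J) - P * P := by rw [hY]; noncomm_ring
    _ = Y := by rw [hPX, h1, hPidem, hY]
  have hYP : Y * P = Y := by
    have h1 : (J * X * J) * P = J * X * J := by
      calc (J * X * J) * P = J * X * (J * P) := by noncomm_ring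
      _ = J * X * (P * J) := by rw [hJP]
      _ = J * (X * P) * J := by noncomm_ring
      _ = J * X * J := by rw [hXP]
    calc Y * P = X * P + (J * X * J) * P - P * P := by rw [hY]; noncomm_ring
    _ = Y := by rw [hXP, h1, hPidem, hY]
  have step2 : S * Y * S = 0 → Y = 0 := by
    intro h
    have hDapp : ∀ a, D a = S (S a) := by
      intro a
      have := congrFun (congrArg (DFunLike.coe) hSsq) a
      simpa [ContinuousLinearMap.mul_apply] using this.symm
    have hc1 : ∀ a b : H, ⟪Y (D a), D b⟫_ℂ = 0 := by
      intro a b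
      have hS0' : S (Y (D a)) = 0 := by
        have h1 : S (Y (S (S a))) = (S * Y * S) (S a) := by
          simp [ContinuousLinearMap.mul_apply]
        rw [hDapp a, h1, h]
        simp
      calc ⟪Y (D a), D b⟫_ℂ = ⟪Y (D a), S (S b)⟫_ℂ := by rw [hDapp b]
      _ = ⟪S (Y (D a)), S b⟫_ℂ := (hSsym (Y (D a)) (S b)).symm
      _ = 0 := by rw [hS0']; simp
    have hstep : ∀ a, Y (D a) = 0 := by
      intro a
      have hcM : Y (D a) ∈ (LinearMap.range (D : H →ₗ[ℂ] H)).topologicalClosure := by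
        have h1 : P (Y (D a)) = Y (D a) := by
          have := congrFun (congrArg (DFunLike.coe) hPY) (D a)
          simpa [ContinuousLinearMap.mul_apply] using this
        rw [← hPrange, ← h1]
        exact ⟨Y (D a), rfl⟩
      have hkey : ∀ v ∈ (LinearMap.range (D : H →ₗ[ℂ] H)).topologicalClosure, ⟪Y (D a), v⟫_ℂ = 0 := by
        intro v hv
        have hclosed : IsClosed {w : H | ⟪Y (D a), w⟫_ℂ = 0} :=
          isClosed_eq (continuous_const.inner continuous_id) continuous_const
        have hsub : ((LinearMap.range (D : H →ₗ[ℂ] H) : Submodule ℂ H) : Set H) ⊆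
            {w : H | ⟪Y (D a), w⟫_ℂ = 0} := by
          rintro w ⟨b, rfl⟩
          exact hc1 a b
        have hv' : v ∈ closure ((LinearMap.range (D : H →ₗ[ℂ] H) : Submodule ℂ H) : Set H) := hv
        exact closure_minimal hsub hclosed hv'
      have := hkey (Y (D a)) hcM
      rwa [inner_self_eq_zero] at this
    have hker : (LinearMap.range (D : H →ₗ[ℂ] H)).topologicalClosure ≤ LinearMap.ker (Y : H →ₗ[ℂ] H) := by
      refine Submodule.topologicalClosure_minimal _ ?_ ?_
      · rintro x ⟨a, rfl⟩
        exact hstep a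
      · exact ContinuousLinearMap.isClosed_ker Y
    have hYP0 : Y * P = 0 := by
      ext x
      simp only [ContinuousLinearMap.mul_apply, ContinuousLinearMap.zero_apply]
      exact hker (by rw [← hPrange]; exact ⟨x, rfl⟩)
    rw [← hYP, hYP0]
  rw [step1]
  constructor
  · intro h
    have h0 := step2 h
    rw [hY] at h0
    exact sub_eq_zero.mp h0
  · intro h
    have hY0 : Y = 0 := by rw [hY, sub_eq_zero]; exact h
    rw [hY0, mul_zero, zero_mul]
end

section
/- Let D = M₊ ⊕ M₋ be a closed subspace of ℋ, where M₊ ⊆ ℋ₊ and M₋ ⊆ ℋ₋ are closed subspaces, let T₀ : D → ℋ be a symmetric linear strong contraction satisfying J T₀ f = −T₀ J f for all f ∈ D, and assume that 𝒟 := (I + T₀)(D) is dense in ℋ. Then: (a) I + T₀ is injective on D, so the operator G₀ with domain 𝒟 given by G₀((I+T₀)x) := (I−T₀)x for x ∈ D is well defined; (b) G₀ is a densely defined symmetric operator with closed graph; (c) G₀ is positive, i.e. ⟨G₀ f, f⟩ > 0 for every nonzero f ∈ 𝒟; (d) G₀ is injective, and J G₀ f = G₀^{-1} J f for every f ∈ 𝒟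 (in particular J maps 𝒟 onto the range of G₀). -/
/-- Properties of the Cayley transform `G₀((I+T₀)x) = (I−T₀)x` of a symmetric
strong contraction `T₀` on `D = M₊ ⊕ M₋` anticommuting with `J`, when `𝒟 = (I+T₀)D` is dense:
well-definedness (injectivity of `I+T₀` on `D`), symmetry, closed graph, positivity,
injectivity of `G₀`, and the relation `J G₀ f = G₀⁻¹ J f` (in particular `J` maps `𝒟` onto
the range of `G₀`). -/
theorem stmt_12
    {H : Type*} [NormedAddCommGroup H] [InnerProductSpace ℂ H] [CompleteSpace H]
    (J : H →L[ℂ] H) (hJsa : IsSelfAdjoint J) (hJ2 : J ∘L J = 1)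
    (Mp Mm : Submodule ℂ H)
    (hMpc : IsClosed (Mp : Set H)) (hMmc : IsClosed (Mm : Set H))
    (hMp : ∀ x ∈ Mp, J x = x) (hMm : ∀ x ∈ Mm, J x = -x)
    (D : Submodule ℂ H) (hD : D = Mp ⊔ Mm) (hDc : IsClosed (D : Set H))
    (T₀ : H →ₗ[ℂ] H)
    (hsc : ∀ f ∈ D, f ≠ 0 → ‖T₀ f‖ < ‖f‖)
    (hJD : ∀ f ∈ D, J f ∈ D)
    (hanti : ∀ f ∈ D, J (T₀ f) = -T₀ (J f))
    (hsymm : ∀ f ∈ D, ∀ g ∈ D, (inner ℂ (T₀ f) g : ℂ) = inner ℂ f (T₀ g))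
    (hdense : Dense ((fun x => x + T₀ x) '' (D : Set H))) :
    -- (a) `I + T₀` is injective on `D`, so `G₀` is well defined
    (∀ x ∈ D, ∀ y ∈ D, x + T₀ x = y + T₀ y → x = y) ∧
    -- (b) `G₀` is symmetric and has closed graph
    (∀ x ∈ D, ∀ y ∈ D,
      (inner ℂ (x - T₀ x) (y + T₀ y) : ℂ) = inner ℂ (x + T₀ x) (y - T₀ y)) ∧
    IsClosed {p : H × H | ∃ x ∈ D, p.1 = x + T₀ x ∧ p.2 = x - T₀ x} ∧
    -- (c) `G₀` is positive
    (∀ x ∈ D, x + T₀ x ≠ 0 → 0 < (inner ℂ (x - T₀ x) (x + T₀ x) : ℂ).re) ∧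
    -- (d) `G₀` is injective and `J G₀ f = G₀⁻¹ J f` for all `f ∈ 𝒟`
    (∀ x ∈ D, ∀ y ∈ D, x - T₀ x = y - T₀ y → x = y) ∧
    (∀ x ∈ D, ∃ y ∈ D, J (x + T₀ x) = y - T₀ y ∧ J (x - T₀ x) = y + T₀ y) ∧
    (∀ y ∈ D, ∃ x ∈ D, J (x + T₀ x) = y - T₀ y) := by
  have hzero : ∀ z ∈ D, ‖T₀ z‖ = ‖z‖ → z = 0 := by
    intro z hz h
    by_contra hne
    exact absurd h (ne_of_lt (hsc z hz hne))
  have hle : ∀ z ∈ D, ‖T₀ z‖ ≤ ‖z‖ := by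
    intro z hz
    by_cases h : z = 0
    · simp [h]
    · exact (hsc z hz h).le
  refine ⟨?_, ?_, ?_, ?_, ?_, ?_, ?_⟩
  · -- (a)
    intro x hx y hy h
    have hz : x - y ∈ D := D.sub_mem hx hy
    have hT : T₀ (x - y) = -(x - y) := by
      rw [map_sub, neg_sub]
      rw [sub_eq_sub_iff_add_eq_add, add_comm]
      exact h
    have hnorm : ‖T₀ (x - y)‖ = ‖x - y‖ := by rw [hT, norm_neg]
    exact sub_eq_zero.mp (hzero _ hz hnorm)
  · -- symmetry
    intro x hx y hy
    simp only [inner_sub_left, inner_add_left, inner_add_right, inner_sub_right]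
    rw [hsymm x hx y hy]
    ring
  · -- closed graph
    apply isClosed_of_closure_subset
    intro p hp
    obtain ⟨u, hu, hlim⟩ := mem_closure_iff_seq_limit.mp hp
    choose z hz h1 h2 using hu
    set x : H := (2 : ℂ)⁻¹ • (p.1 + p.2) with hxdef
    have hzn : ∀ n, z n = (2 : ℂ)⁻¹ • ((u n).1 + (u n).2) := by
      intro n
      rw [h1 n, h2 n]
      rw [smul_add]
      module
    have hlim1 : Filter.Tendsto (fun n => (u n).1) Filter.atTop (nhds p.1) :=
      (continuous_fst.tendsto p).comp hlim
    have hlim2 : Filter.Tendsto (fun n => (u n).2) Filter.atTop (nhds p.2) :=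
      (continuous_snd.tendsto p).comp hlim
    have hzeq : z = fun n => (2 : ℂ)⁻¹ • ((u n).1 + (u n).2) := funext hzn
    have hzlim : Filter.Tendsto z Filter.atTop (nhds x) := by
      rw [hzeq, hxdef]
      exact ((hlim1.add hlim2).const_smul _)
    have hxD : x ∈ D := hDc.mem_of_tendsto hzlim (Filter.Eventually.of_forall hz)
    -- T₀ z n tends to T₀ x
    have hTlim : Filter.Tendsto (fun n => T₀ (z n)) Filter.atTop (nhds (T₀ x)) := by
      rw [tendsto_iff_norm_sub_tendsto_zero]
      have hb : ∀ n, ‖T₀ (z n) - T₀ x‖ ≤ ‖z n - x‖ := by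
        intro n
        rw [← map_sub]
        exact hle _ (D.sub_mem (hz n) hxD)
      have hz0 : Filter.Tendsto (fun n => ‖z n - x‖) Filter.atTop (nhds 0) :=
        tendsto_iff_norm_sub_tendsto_zero.mp hzlim
      exact squeeze_zero (fun n => norm_nonneg _) hb hz0
    -- also T₀ z n = (1/2)(fₙ - gₙ) tends to (1/2)(p.1 - p.2)
    have hTzn : ∀ n, T₀ (z n) = (2 : ℂ)⁻¹ • ((u n).1 - (u n).2) := by
      intro n
      rw [h1 n, h2 n]
      rw [smul_sub]
      module
    have hTlim2 : Filter.Tendsto (fun n => T₀ (z n)) Filter.atTop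
        (nhds ((2 : ℂ)⁻¹ • (p.1 - p.2))) := by
      simp only [hTzn]
      exact ((hlim1.sub hlim2).const_smul _)
    have hTx : T₀ x = (2 : ℂ)⁻¹ • (p.1 - p.2) := tendsto_nhds_unique hTlim hTlim2
    refine ⟨x, hxD, ?_, ?_⟩
    · rw [hTx, hxdef, smul_add, smul_sub]
      module
    · rw [hTx, hxdef, smul_add, smul_sub]
      module
  · -- positivity
    intro x hx hne
    have hx0 : x ≠ 0 := by
      intro h
      apply hne
      simp [h]
    have hlt := hsc x hx hx0
    have key : (inner ℂ (x - T₀ x) (x + T₀ x) : ℂ) = ((‖x‖ ^ 2 - ‖T₀ x‖ ^ 2 : ℝ) : ℂ) := by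
      simp only [inner_sub_left, inner_add_right]
      rw [hsymm x hx x hx, inner_self_eq_norm_sq_to_K, inner_self_eq_norm_sq_to_K]
      push_cast
      ring_nf
      norm_cast
    rw [key]
    simp only [Complex.ofReal_re]
    have h1 : ‖T₀ x‖ ^ 2 < ‖x‖ ^ 2 := by
      apply sq_lt_sq' _ hlt
      have := norm_nonneg (T₀ x)
      linarith
    linarith
  · -- injectivity of G₀
    intro x hx y hy h
    have hz : x - y ∈ D := D.sub_mem hx hy
    have hT : T₀ (x - y) = x - y := by
      rw [map_sub, sub_eq_sub_iff_add_eq_add]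
      exact (add_comm _ _).trans (sub_eq_sub_iff_add_eq_add.mp h).symm
    have hnorm : ‖T₀ (x - y)‖ = ‖x - y‖ := by rw [hT]
    exact sub_eq_zero.mp (hzero _ hz hnorm)
  · -- J G₀ f = G₀⁻¹ J f
    intro x hx
    refine ⟨J x, hJD x hx, ?_, ?_⟩
    · have := hanti x hx
      rw [map_add, this]
      abel
    · have := hanti x hx
      rw [map_sub, this]
      abel
  · -- surjectivity onto range
    intro y hy
    refine ⟨J y, hJD y hy, ?_⟩
    have hJJ : ∀ w, J (J w) = w := by
      intro w
      have := congrArg (fun f => f w) hJ2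
      simpa using this
    have hT : T₀ (J y) = -(J (T₀ y)) := by
      rw [hanti y hy, neg_neg]
    rw [map_add, hJJ, hT, map_neg, hJJ]
    abel
end

section
/- Let D = M₊ ⊕ M₋ be a closed subspace of ℋ (M₊ ⊆ ℋ₊, M₋ ⊆ ℋ₋ closed subspaces), let T₀ : D → ℋ be a symmetric linear strong contraction satisfying J T₀ f = −T₀ J f for all f ∈ D, assume 𝒟 := (I + T₀)(D) is dense in ℋ, and let G₀ be the densely defined operator with domain 𝒟 given by G₀((I+T₀)x) := (I−T₀)x. Then the range of I + G₀ equals D, and the kernel of I + G₀* equals the orthogonal complement of D in ℋ, where G₀* denotes the adjoint of the densely defined operator G₀. -/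
/-- For the Cayley transform `G₀((I+T₀)x) = (I−T₀)x`, a densely defined
operator with domain `𝒟 = (I+T₀)D`, the range of `I + G₀` equals `D`, and the kernel of
`I + G₀*` is the orthogonal complement of `D` in `ℋ`. -/
theorem stmt_13
    {H : Type*} [NormedAddCommGroup H] [InnerProductSpace ℂ H] [CompleteSpace H]
    (J : H →L[ℂ] H) (hJsa : IsSelfAdjoint J) (hJ2 : J ∘L J = 1)
    (Mp Mm : Submodule ℂ H)
    (hMpc : IsClosed (Mp : Set H)) (hMmc : IsClosed (Mm : Set H))
    (hMp : ∀ x ∈ Mp, J x = x) (hMm : ∀ x ∈ Mm, J x = -x)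
    (D : Submodule ℂ H) (hD : D = Mp ⊔ Mm) (hDc : IsClosed (D : Set H))
    (T₀ : H →ₗ[ℂ] H)
    (hsc : ∀ f ∈ D, f ≠ 0 → ‖T₀ f‖ < ‖f‖)
    (hJD : ∀ f ∈ D, J f ∈ D)
    (hanti : ∀ f ∈ D, J (T₀ f) = -T₀ (J f))
    (hsymm : ∀ f ∈ D, ∀ g ∈ D, (inner ℂ (T₀ f) g : ℂ) = inner ℂ f (T₀ g))
    (G₀ : H →ₗ.[ℂ] H)
    (hdom : G₀.domain = D.map (LinearMap.id + T₀))
    (hdense : Dense (G₀.domain : Set H))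
    (hval : ∀ x ∈ D, ∀ h : x + T₀ x ∈ G₀.domain, G₀ ⟨x + T₀ x, h⟩ = x - T₀ x) :
    (Set.range (fun f : G₀.domain => (f : H) + G₀ f) = (D : Set H)) ∧
    ({g : H | ∃ hg : g ∈ G₀.adjoint.domain, G₀.adjoint ⟨g, hg⟩ = -g} = (Dᗮ : Set H)) := by
  -- a convenient description of elements of the domain
  have hmem : ∀ f : G₀.domain, ∃ x ∈ D, x + T₀ x = (f : H) := by
    intro f
    have hf : (f : H) ∈ D.map (LinearMap.id + T₀) := hdom ▸ f.2
    rcases Submodule.mem_map.mp hf with ⟨x, hx, hfx⟩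
    exact ⟨x, hx, by simpa using hfx⟩
  constructor
  · ext d
    constructor
    · rintro ⟨f, rfl⟩
      rcases hmem f with ⟨x, hx, hfx⟩
      have hGf : G₀ f = x - T₀ x := by
        have := hval x hx (hfx ▸ f.2)
        convert this using 2
        · exact Subtype.ext hfx.symm
      simp only [hGf]
      rw [← hfx]
      have : x + T₀ x + (x - T₀ x) = (2 : ℂ) • x := by
        rw [two_smul]; abel
      rw [this]
      exact Submodule.smul_mem D _ hx
    · intro hd
      set x := ((2 : ℂ)⁻¹) • d with hx
      have hxD : x ∈ D := Submodule.smul_mem D _ hd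
      have hfd : x + T₀ x ∈ G₀.domain := by
        rw [hdom]; exact Submodule.mem_map.mpr ⟨x, hxD, by simp⟩
      refine ⟨⟨x + T₀ x, hfd⟩, ?_⟩
      have hGf := hval x hxD hfd
      simp only [hGf]
      have : x + T₀ x + (x - T₀ x) = (2 : ℂ) • x := by
        rw [two_smul]; abel
      rw [this, hx, smul_smul]
      norm_num
  · ext g
    simp only [Set.mem_setOf_eq, SetLike.mem_coe, Submodule.mem_orthogonal]
    constructor
    · rintro ⟨hg, hGg⟩ u hu
      have key := G₀.adjoint_isFormalAdjoint hdense ⟨g, hg⟩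
      have huf : u + T₀ u ∈ G₀.domain := by
        rw [hdom]; exact Submodule.mem_map.mpr ⟨u, hu, by simp⟩
      have h1 := key ⟨u + T₀ u, huf⟩
      rw [hGg, hval u hu huf] at h1
      -- h1 : ⟪-g, u + T₀ u⟫ = ⟪g, u - T₀ u⟫
      simp only [inner_neg_left, inner_add_right, inner_sub_right] at h1
      have h3 : (inner ℂ g u : ℂ) = 0 := by
        have h2 : (2 : ℂ) * inner ℂ g u = 0 := by linear_combination -h1
        simpa using h2
      rw [← inner_conj_symm, h3, map_zero]
    · intro hg
      have horth : ∀ u ∈ D, (inner ℂ g u : ℂ) = 0 := by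
        intro u hu
        rw [← inner_conj_symm, hg u hu, map_zero]
      have hkey : ∀ f : G₀.domain, (inner ℂ (-g) (f : H) : ℂ) = inner ℂ g (G₀ f) := by
        intro f
        rcases hmem f with ⟨x, hx, hfx⟩
        have hGf : G₀ f = x - T₀ x := by
          have := hval x hx (hfx ▸ f.2)
          convert this using 2
          · exact Subtype.ext hfx.symm
        rw [hGf, ← hfx]
        simp only [inner_neg_left, inner_add_right, inner_sub_right,
          horth x hx]
        ring
      have hgdom : g ∈ G₀.adjoint.domain :=
        G₀.mem_adjoint_domain_of_exists g ⟨-g, fun x => hkey x⟩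
      refine ⟨hgdom, ?_⟩
      exact G₀.adjoint_apply_eq hdense ⟨g, hgdom⟩ (fun x => hkey x)
end

section
/- Let 𝔐 be a closed subspace of ℋ with J(𝔐) = 𝔐, let P be the orthogonal projection onto 𝔐, let 𝔐₁ ⊆ 𝔐 be a closed subspace, and let X be the orthogonal projection onto 𝔐₁. Then 𝔐 is the orthogonal direct sum 𝔐 = 𝔐₁ ⊕ J(𝔐₁) (i.e. 𝔐₁ ⟂ J(𝔐₁) and 𝔐₁ + J(𝔐₁) = 𝔐) if and only if X + J X J = P. -/
/-- Two self-adjoint idempotent operators with the same range are equal. -/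
private lemma proj_ext' {H : Type*} [NormedAddCommGroup H] [InnerProductSpace ℂ H]
    [CompleteSpace H] (R S : H →L[ℂ] H) (hR : IsSelfAdjoint R) (hS : IsSelfAdjoint S)
    (hR2 : R * R = R) (hS2 : S * S = S)
    (h : LinearMap.range (R : H →ₗ[ℂ] H) = LinearMap.range (S : H →ₗ[ℂ] H)) : R = S := by
  have hSR : S * R = R := by
    ext v
    obtain ⟨w, hw⟩ : R v ∈ LinearMap.range (S : H →ₗ[ℂ] H) := h ▸ LinearMap.mem_range_self _ v
    calc (S * R) v = S (R v) := rfl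
    _ = S (S w) := by rw [← hw]; rfl
    _ = (S * S) w := rfl
    _ = S w := by rw [hS2]
    _ = R v := hw
  have hRS : R * S = S := by
    ext v
    obtain ⟨w, hw⟩ : S v ∈ LinearMap.range (R : H →ₗ[ℂ] H) := h ▸ LinearMap.mem_range_self _ v
    calc (R * S) v = R (S v) := rfl
    _ = R (R w) := by rw [← hw]; rfl
    _ = (R * R) w := rfl
    _ = R w := by rw [hR2]
    _ = S v := hw
  calc R = star R := hR.symm
  _ = star (S * R) := by rw [hSR]
  _ = star R * star S := star_mul _ _
  _ = R * S := by rw [hR.star_eq, hS.star_eq]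
  _ = S := hRS

/-- A closed subspace `𝔐₁ ⊆ 𝔐` (with orthogonal projection `X` onto `𝔐₁`)
is hypermaximal neutral, i.e. `𝔐 = 𝔐₁ ⊕ J(𝔐₁)` orthogonally, iff `X + J X J = P`, where `P`
is the orthogonal projection onto the `J`-invariant closed subspace `𝔐`. -/
theorem stmt_15
    {H : Type*} [NormedAddCommGroup H] [InnerProductSpace ℂ H] [CompleteSpace H]
    (J : H →L[ℂ] H) (hJsa : IsSelfAdjoint J) (hJ2 : J ∘L J = 1)
    (M : Submodule ℂ H) (hMc : IsClosed (M : Set H))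
    (hJM : M.map J.toLinearMap = M)
    (P : H →L[ℂ] H) (hPsa : IsSelfAdjoint P) (hPidem : P ∘L P = P)
    (hPrange : LinearMap.range (P : H →ₗ[ℂ] H) = M)
    (M₁ : Submodule ℂ H) (hM₁c : IsClosed (M₁ : Set H)) (hM₁M : M₁ ≤ M)
    (X : H →L[ℂ] H) (hXsa : IsSelfAdjoint X) (hXidem : X ∘L X = X)
    (hXrange : LinearMap.range (X : H →ₗ[ℂ] H) = M₁) :
    ((∀ x ∈ M₁, ∀ y ∈ M₁, (inner ℂ x (J y) : ℂ) = 0) ∧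
      M₁ ⊔ M₁.map J.toLinearMap = M) ↔
      X + J ∘L X ∘L J = P := by
  have hJ2' : J * J = 1 := hJ2
  have hX2 : X * X = X := hXidem
  have hP2 : P * P = P := hPidem
  -- inner product moves across X
  have hXin : ∀ a b : H, (inner ℂ (X a) b : ℂ) = inner ℂ a (X b) := by
    intro a b
    have hsa := ContinuousLinearMap.isSelfAdjoint_iff'.mp hXsa
    have h := ContinuousLinearMap.adjoint_inner_left X b a
    rwa [hsa] at h
  -- J maps M into M
  have hJmem : ∀ m ∈ M, J m ∈ M := by
    intro m hm
    rw [← hJM]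
    exact ⟨m, hm, rfl⟩
  have hXmem : ∀ v : H, X v ∈ M₁ := fun v => hXrange ▸ LinearMap.mem_range_self _ v
  -- key equivalence: orthogonality ↔ X J X = 0
  have hkey : (∀ x ∈ M₁, ∀ y ∈ M₁, (inner ℂ x (J y) : ℂ) = 0) ↔ X * J * X = 0 := by
    constructor
    · intro hO
      ext v
      apply ext_inner_left ℂ
      intro u
      simp only [ContinuousLinearMap.mul_apply, ContinuousLinearMap.zero_apply,
        inner_zero_right]
      rw [← hXin]
      exact hO _ (hXmem u) _ (hXmem v)
    · intro h0 x hx y hy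
      rw [← hXrange] at hx hy
      obtain ⟨x', rfl⟩ := hx
      obtain ⟨y', rfl⟩ := hy
      show inner ℂ (X x') (J (X y')) = 0
      rw [hXin]
      have h0' : X (J (X y')) = 0 := by
        have := congrArg (fun T : H →L[ℂ] H => T y') h0
        simpa [ContinuousLinearMap.mul_apply] using this
      rw [h0', inner_zero_right]
  rw [hkey]
  constructor
  · rintro ⟨h0, hsum⟩
    -- forward: X + JXJ = P
    have hQ2 : (X + J * X * J) * (X + J * X * J) = X + J * X * J := by
      calc (X + J * X * J) * (X + J * X * J)
          = X * X + (X * J * X) * J + J * (X * J * X) + J * X * (J * J) * X * J := by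
            noncomm_ring
      _ = X * X + 0 * J + J * 0 + J * X * 1 * X * J := by rw [h0, hJ2']
      _ = X * X + J * (X * X) * J := by noncomm_ring
      _ = X + J * X * J := by rw [hX2]
    have hQsa : IsSelfAdjoint (X + J * X * J) := by
      have hstar : star (X + J * X * J) = star X + star J * (star X * star J) := by
        rw [star_add, star_mul, star_mul]
      rw [IsSelfAdjoint, hstar, hXsa.star_eq, hJsa.star_eq, ← mul_assoc]
    have hQX : (X + J * X * J) * X = X := by
      calc (X + J * X * J) * X = X * X + J * (X * J * X) := by noncomm_ring
      _ = X + J * 0 := by rw [hX2, h0]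
      _ = X := by noncomm_ring
    have hQJX : (X + J * X * J) * (J * X) = J * X := by
      calc (X + J * X * J) * (J * X)
          = (X * J * X) + J * X * (J * J) * X := by noncomm_ring
      _ = 0 + J * X * 1 * X := by rw [h0, hJ2']
      _ = J * (X * X) := by noncomm_ring
      _ = J * X := by rw [hX2]
    have hQrange : LinearMap.range ((X + J * X * J : H →L[ℂ] H) : H →ₗ[ℂ] H) = LinearMap.range (P : H →ₗ[ℂ] H) := by
      rw [hPrange]
      apply le_antisymm
      · rintro _ ⟨v, rfl⟩
        have h1 : X v ∈ M := hM₁M (hXmem v)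
        have h2 : J (X (J v)) ∈ M := hJmem _ (hM₁M (hXmem (J v)))
        have : (X + J * X * J) v = X v + J (X (J v)) := by
          simp [ContinuousLinearMap.add_apply, ContinuousLinearMap.mul_apply]
        show (X + J * X * J) v ∈ M
        rw [this]
        exact M.add_mem h1 h2
      · intro m hm
        rw [← hsum] at hm
        obtain ⟨a, ha, c, hc, rfl⟩ := Submodule.mem_sup.mp hm
        obtain ⟨b, hb, rfl⟩ := hc
        rw [← hXrange] at ha hb
        obtain ⟨a', rfl⟩ := ha
        obtain ⟨b', rfl⟩ := hb
        refine ⟨X a' + J.toLinearMap (X b'), ?_⟩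
        have hm1 : (X + J * X * J) (X a') = X a' := by
          have := congrArg (fun T : H →L[ℂ] H => T a') hQX
          simpa [ContinuousLinearMap.mul_apply] using this
        have hm2 : (X + J * X * J) (J (X b')) = J (X b') := by
          have := congrArg (fun T : H →L[ℂ] H => T b') hQJX
          simpa [ContinuousLinearMap.mul_apply] using this
        show (X + J * X * J) (X a' + J (X b')) = X a' + J.toLinearMap (X b')
        rw [map_add, hm1, hm2]
        rfl
    exact proj_ext' (X + J * X * J) P hQsa hPsa hQ2 hP2 hQrange
  · intro hEq
    have hEq' : X + J * X * J = P := hEq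
    set Y := J * X * J with hY
    have hYY : Y * Y = Y := by
      calc Y * Y = J * X * (J * J) * X * J := by rw [hY]; noncomm_ring
      _ = J * X * 1 * X * J := by rw [hJ2']
      _ = J * (X * X) * J := by noncomm_ring
      _ = J * X * J := by rw [hX2]
      _ = Y := by rw [hY]
    have hanti : X * Y + Y * X = 0 := by
      have h1 : X + (X * Y + Y * X) + Y = X + Y := by
        calc X + (X * Y + Y * X) + Y = X * X + (X * Y + Y * X) + Y * Y := by
              rw [hX2, hYY]
        _ = (X + Y) * (X + Y) := by noncomm_ring
        _ = P * P := by rw [hEq']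
        _ = P := hP2
        _ = X + Y := hEq'.symm
      have : X * Y + Y * X = (X + (X * Y + Y * X) + Y) - (X + Y) := by abel
      rw [this, h1, sub_self]
    have hl : X * Y + X * (Y * X) = 0 := by
      have e : X * (X * Y + Y * X) = X * X * Y + X * (Y * X) := by noncomm_ring
      rw [hanti, mul_zero, hX2] at e
      exact e.symm
    have hr : X * (Y * X) + Y * X = 0 := by
      have e : (X * Y + Y * X) * X = X * (Y * X) + Y * (X * X) := by noncomm_ring
      rw [hanti, zero_mul, hX2] at e
      exact e.symm
    have heq1 : X * Y = Y * X := by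
      have hsub : X * Y - Y * X = (X * Y + X * (Y * X)) - (X * (Y * X) + Y * X) := by abel
      rw [hl, hr, sub_self] at hsub
      exact sub_eq_zero.mp hsub
    have hXY : X * Y = 0 := by
      have h2 : (2 : ℂ) • (X * Y) = 0 := by
        rw [two_smul]
        rw [← heq1] at hanti
        exact hanti
      have h3 := congrArg (fun A : H →L[ℂ] H => ((2 : ℂ)⁻¹) • A) h2
      simpa [smul_smul] using h3
    have hXJX : X * J * X = 0 := by
      have e : X * Y * J = X * J * X * (J * J) := by rw [hY]; noncomm_ring
      rw [hXY, zero_mul, hJ2', mul_one] at e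
      exact e.symm
    refine ⟨hXJX, ?_⟩
    apply le_antisymm
    · refine sup_le hM₁M ?_
      calc M₁.map J.toLinearMap ≤ M.map J.toLinearMap := Submodule.map_mono hM₁M
      _ = M := hJM
    · intro m hm
      have hPm : P m = m := by
        rw [← hPrange] at hm
        obtain ⟨w, rfl⟩ := hm
        calc P (P w) = (P * P) w := rfl
        _ = P w := by rw [hP2]
      have hdecomp : m = X m + J (X (J m)) := by
        have := congrArg (fun T : H →L[ℂ] H => T m) hEq'
        simp only [ContinuousLinearMap.add_apply, ContinuousLinearMap.mul_apply] at this
        rw [hPm] at this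
        exact this.symm
      rw [hdecomp]
      exact Submodule.add_mem_sup (hXmem m) ⟨X (J m), hXmem (J m), rfl⟩
end

section
/- In the Hilbert space ℓ²(ℕ) of square-summable complex sequences indexed by n ≥ 1, let Ξ be the bounded diagonal operator defined on the standard orthonormal basis by Ξ eₙ = (√(2n−1)/n) eₙ, and for real δ > ½ let χ_δ ∈ ℓ² be the sequence (n^{−δ})_{n≥1}. Then χ_δ belongs to the range of Ξ if and only if δ > 1. -/
lemma aux_sum (δ : ℝ) : Summable (fun n : ℕ => ((n : ℝ) + 1) ^ (1 - 2 * δ)) ↔ 1 < δ := by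
  have h := summable_nat_add_iff (f := fun n : ℕ => (n : ℝ) ^ (1 - 2 * δ)) 1
  have e : (fun n : ℕ => ((n : ℝ) + 1) ^ (1 - 2 * δ))
      = fun n : ℕ => ((n + 1 : ℕ) : ℝ) ^ (1 - 2 * δ) := by
    funext n; push_cast; ring_nf
  rw [e]
  rw [h, Real.summable_nat_rpow]
  constructor <;> intro hh <;> linarith



/-- In `ℓ²` (sequences indexed by `n ≥ 1`, here shifted to `ℕ` via
`n ↦ n + 1`), the vector `χ_δ = (n^{−δ})_{n ≥ 1}` lies in the range of the bounded diagonal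
operator `Ξ eₙ = (√(2n−1)/n) eₙ` iff `δ > 1`; membership in the range amounts to the existence
of an `ℓ²`-sequence `c` with `(√(2n−1)/n) · cₙ = n^{−δ}` for all `n ≥ 1`. -/
theorem stmt_17 (δ : ℝ) (hδ : 1 / 2 < δ) :
    (∃ c : ℕ → ℂ, Memℓp c 2 ∧
      ∀ n : ℕ, ((Real.sqrt (2 * (n : ℝ) + 1) / ((n : ℝ) + 1) : ℝ) : ℂ) * c n =
        ((((n : ℝ) + 1) ^ (-δ) : ℝ) : ℂ)) ↔ 1 < δ := by
  have hp : (0 : ℝ) < (2 : ENNReal).toReal := by norm_num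
  have hpos : ∀ n : ℕ, (0 : ℝ) < Real.sqrt (2 * (n : ℝ) + 1) := by
    intro n; apply Real.sqrt_pos.2; positivity
  have hn1 : ∀ n : ℕ, (0 : ℝ) < (n : ℝ) + 1 := by intro n; positivity
  have hsq : ∀ n : ℕ, Real.sqrt (2 * (n : ℝ) + 1) ^ 2 = 2 * (n : ℝ) + 1 := by
    intro n; rw [Real.sq_sqrt]; positivity
  constructor
  · rintro ⟨c, hc, heq⟩
    have hsum := (memℓp_gen_iff hp).1 hc
    have hnorm : ∀ n : ℕ, ‖c n‖ ^ (2:ENNReal).toReal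
        = ((n : ℝ) + 1) ^ (-(2*δ)) * (((n:ℝ)+1)^2 / (2 * (n:ℝ) + 1)) := by
      intro n
      have h1 : ‖(((Real.sqrt (2 * (n : ℝ) + 1) / ((n : ℝ) + 1) : ℝ) : ℂ)) * c n‖
          = ‖((((n : ℝ) + 1) ^ (-δ) : ℝ) : ℂ)‖ := by rw [heq n]
      rw [norm_mul, Complex.norm_real, Complex.norm_real, Real.norm_of_nonneg (by positivity),
        Real.norm_of_nonneg (by positivity)] at h1
      have h2 : ‖c n‖ = ((n : ℝ) + 1) ^ (-δ) * (((n:ℝ)+1) / Real.sqrt (2 * (n : ℝ) + 1)) := by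
        field_simp at h1 ⊢
        nlinarith [hpos n, hn1 n, h1]
      rw [h2]
      rw [show (2:ENNReal).toReal = (2:ℝ) by norm_num, Real.rpow_two]
      rw [mul_pow, div_pow, hsq n, ← Real.rpow_natCast (((n:ℝ)+1) ^ (-δ)) 2,
        ← Real.rpow_mul (le_of_lt (hn1 n)),
        show (-δ)*((2:ℕ):ℝ) = -(2*δ) by push_cast; ring]
    rw [← aux_sum δ]
    have hsum2 : Summable (fun n : ℕ => (1/2) * ((n : ℝ) + 1) ^ (1 - 2 * δ)) := by
      apply Summable.of_nonneg_of_le (fun n => by positivity) _ hsum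
      intro n
      rw [hnorm n]
      have key : ((n : ℝ) + 1) ^ (1 - 2 * δ)
          = ((n : ℝ) + 1) ^ (-(2*δ)) * ((n:ℝ)+1) := by
        rw [← Real.rpow_add_one (by positivity)]; ring_nf
      rw [key]
      have h3 : ((n:ℝ)+1) / 2 ≤ ((n:ℝ)+1)^2 / (2 * (n:ℝ) + 1) := by
        rw [div_le_div_iff₀ (by norm_num) (by positivity)]; nlinarith
      have h4 : (0:ℝ) ≤ ((n : ℝ) + 1) ^ (-(2*δ)) := by positivity
      calc 1/2 * (((n : ℝ) + 1) ^ (-(2*δ)) * ((n:ℝ)+1))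
          = ((n : ℝ) + 1) ^ (-(2*δ)) * (((n:ℝ)+1)/2) := by ring
        _ ≤ ((n : ℝ) + 1) ^ (-(2*δ)) * (((n:ℝ)+1)^2 / (2 * (n:ℝ) + 1)) := by
            exact mul_le_mul_of_nonneg_left h3 h4
    have := hsum2.mul_left 2
    simpa using this
  · intro h1δ
    refine ⟨fun n => (((((n : ℝ) + 1) ^ (1 - δ)) / Real.sqrt (2 * (n : ℝ) + 1) : ℝ) : ℂ), ?_, ?_⟩
    · apply memℓp_gen
      apply Summable.of_nonneg_of_le (fun n => by positivity) _ ((aux_sum δ).2 h1δ)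
      intro n
      rw [Complex.norm_real, Real.norm_of_nonneg (by positivity),
        show (2:ENNReal).toReal = (2:ℝ) by norm_num, Real.rpow_two, div_pow, hsq n,
        ← Real.rpow_natCast ((((n:ℝ)+1)) ^ (1-δ)) 2, ← Real.rpow_mul (le_of_lt (hn1 n))]
      have key : ((n : ℝ) + 1) ^ (1 - 2 * δ)
          = ((n : ℝ) + 1) ^ ((1-δ)*(2:ℕ)) / ((n:ℝ)+1) := by
        rw [← Real.rpow_sub_one (by positivity)]; norm_num; ring_nf
      rw [key]
      apply div_le_div_of_nonneg_left (by positivity) (hn1 n) (by linarith [hn1 n])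
    · intro n
      rw [← Complex.ofReal_mul]
      congr 1
      rw [div_mul_div_comm, mul_comm (((n:ℝ)+1)) (Real.sqrt (2*(n:ℝ)+1)),
        mul_div_mul_left _ _ (ne_of_gt (hpos n)),
        ← Real.rpow_sub_one (by positivity)]
      norm_num
end

section
/- Let 𝒟 be a dense linear subspace of ℋ and C : 𝒟 → ℋ a linear map. The following are equivalent: (i) there exist a closed positive subspace L₊ and a closed negative subspace L₋ of the Krein space (ℋ, [·,·]) with [f₊, f₋] = 0 for all f₊ ∈ L₊, f₋ ∈ L₋, such that 𝒟 = L₊ ⊕ L₋ (algebraic direct sum) and C(f₊ + f₋) = f₊ − f₋ for all f₊ ∈ L₊, f₋ ∈ L₋; (ii) C maps 𝒟 into 𝒟 with C(Cf) = f for all f ∈ 𝒟, and the operator G₀ := J ∘ C with domain 𝒟 is symmetric (⟨G₀f, g⟩ = ⟨f, G₀g⟩ for f, g ∈ 𝒟), positive (⟨G₀f, f⟩ > 0 for nonzero f ∈ 𝒟), and has closed graph. -/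
/-- A linear map `C` on a dense subspace `𝒟` comes from a pair of dual
definite closed subspaces `L±` with `𝒟 = L₊ ⊕ L₋` and `C(f₊ + f₋) = f₊ − f₋` iff `C` is an
involution of `𝒟` such that `G₀ = J C` (with domain `𝒟`) is symmetric, positive and has
closed graph. -/
theorem stmt_18
    {H : Type*} [NormedAddCommGroup H] [InnerProductSpace ℂ H] [CompleteSpace H]
    (J : H →L[ℂ] H) (hJsa : IsSelfAdjoint J) (hJ2 : J ∘L J = 1)
    (𝒟 : Submodule ℂ H) (hdense : Dense (𝒟 : Set H))
    (C : H →ₗ[ℂ] H) :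
    (∃ Lp Lm : Submodule ℂ H,
      IsClosed (Lp : Set H) ∧ IsClosed (Lm : Set H) ∧
      (∀ f ∈ Lp, f ≠ 0 → 0 < (inner ℂ (J f) f : ℂ).re) ∧
      (∀ f ∈ Lm, f ≠ 0 → (inner ℂ (J f) f : ℂ).re < 0) ∧
      (∀ fp ∈ Lp, ∀ fm ∈ Lm, (inner ℂ (J fp) fm : ℂ) = 0) ∧
      Lp ⊓ Lm = ⊥ ∧ 𝒟 = Lp ⊔ Lm ∧
      (∀ fp ∈ Lp, ∀ fm ∈ Lm, C (fp + fm) = fp - fm)) ↔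
    ((∀ f ∈ 𝒟, C f ∈ 𝒟) ∧ (∀ f ∈ 𝒟, C (C f) = f) ∧
      (∀ f ∈ 𝒟, ∀ g ∈ 𝒟, (inner ℂ (J (C f)) g : ℂ) = inner ℂ f (J (C g))) ∧
      (∀ f ∈ 𝒟, f ≠ 0 → 0 < (inner ℂ (J (C f)) f : ℂ).re) ∧
      IsClosed {p : H × H | p.1 ∈ 𝒟 ∧ p.2 = J (C p.1)}) := by
  have hJJ : ∀ z : H, J (J z) = z := by
    intro z
    have := ContinuousLinearMap.ext_iff.mp hJ2 z
    simpa using this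
  have hsym : ∀ x y : H, (inner ℂ (J x) y : ℂ) = inner ℂ x (J y) := fun x y =>
    hJsa.isSymmetric x y
  constructor
  · rintro ⟨Lp, Lm, hLpc, hLmc, hpos, hneg, horth, hinf, hsup, hC⟩
    -- orthogonality also in the other order
    have horth' : ∀ fm ∈ Lm, ∀ fp ∈ Lp, (inner ℂ (J fm) fp : ℂ) = 0 := by
      intro fm hfm fp hfp
      have h1 : (inner ℂ (J fp) fm : ℂ) = 0 := horth fp hfp fm hfm
      have : (inner ℂ fm (J fp) : ℂ) = 0 := by
        rw [← inner_conj_symm, h1, map_zero]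
      rw [hsym]; exact this
    -- decomposition of elements of 𝒟
    have hdec : ∀ f ∈ 𝒟, ∃ fp ∈ Lp, ∃ fm ∈ Lm, f = fp + fm := by
      intro f hf
      rw [hsup] at hf
      rcases Submodule.mem_sup.mp hf with ⟨a, ha, b, hb, hab⟩
      exact ⟨a, ha, b, hb, hab.symm⟩
    refine ⟨?_, ?_, ?_, ?_, ?_⟩
    · -- maps 𝒟 to 𝒟
      intro f hf
      rcases hdec f hf with ⟨fp, hfp, fm, hfm, rfl⟩
      rw [hC fp hfp fm hfm, hsup, sub_eq_add_neg]
      exact Submodule.add_mem _ (Submodule.mem_sup_left hfp)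
        (Submodule.mem_sup_right (Submodule.neg_mem _ hfm))
    · -- involution
      intro f hf
      rcases hdec f hf with ⟨fp, hfp, fm, hfm, rfl⟩
      rw [hC fp hfp fm hfm, sub_eq_add_neg, hC fp hfp (-fm) (Submodule.neg_mem _ hfm)]
      abel
    · -- symmetry
      intro f hf g hg
      rcases hdec f hf with ⟨fp, hfp, fm, hfm, rfl⟩
      rcases hdec g hg with ⟨gp, hgp, gm, hgm, rfl⟩
      rw [hC fp hfp fm hfm, hC gp hgp gm hgm]
      have e1 : (inner ℂ (J fp) gm : ℂ) = 0 := horth fp hfp gm hgm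
      have e2 : (inner ℂ (J fm) gp : ℂ) = 0 := horth' fm hfm gp hgp
      have e3 : (inner ℂ fp (J gm) : ℂ) = 0 := by rw [← hsym]; exact e1
      have e4 : (inner ℂ fm (J gp) : ℂ) = 0 := by rw [← hsym]; exact e2
      have e5 : (inner ℂ (J fp) gp : ℂ) = inner ℂ fp (J gp) := hsym _ _
      have e6 : (inner ℂ (J fm) gm : ℂ) = inner ℂ fm (J gm) := hsym _ _
      simp only [map_sub, map_add, inner_sub_left, inner_add_right, inner_add_left,
        inner_sub_right, e1, e2, e3, e4, e5, e6]
      ring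
    · -- positivity
      intro f hf hfne
      rcases hdec f hf with ⟨fp, hfp, fm, hfm, rfl⟩
      rw [hC fp hfp fm hfm]
      have e1 : (inner ℂ (J fp) fm : ℂ) = 0 := horth fp hfp fm hfm
      have e2 : (inner ℂ (J fm) fp : ℂ) = 0 := horth' fm hfm fp hfp
      have key : (inner ℂ (J (fp - fm)) (fp + fm) : ℂ) =
          inner ℂ (J fp) fp - inner ℂ (J fm) fm := by
        simp only [map_sub, inner_sub_left, inner_add_right, e1, e2]
        ring
      rw [key]
      have hnot : fp ≠ 0 ∨ fm ≠ 0 := by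
        by_contra hcon
        push_neg at hcon
        exact hfne (by rw [hcon.1, hcon.2, add_zero])
      have hp : 0 ≤ (inner ℂ (J fp) fp : ℂ).re := by
        rcases eq_or_ne fp 0 with h | h
        · simp [h]
        · exact le_of_lt (hpos fp hfp h)
      have hm : (inner ℂ (J fm) fm : ℂ).re ≤ 0 := by
        rcases eq_or_ne fm 0 with h | h
        · simp [h]
        · exact le_of_lt (hneg fm hfm h)
      have : (inner ℂ (J fp) fp : ℂ).re - (inner ℂ (J fm) fm : ℂ).re > 0 := by
        rcases hnot with h | h
        · have := hpos fp hfp h; linarith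
        · have := hneg fm hfm h; linarith
      simpa [Complex.sub_re] using this
    · -- closed graph
      have hset : {p : H × H | p.1 ∈ 𝒟 ∧ p.2 = J (C p.1)} =
          (fun p : H × H => ((2 : ℂ)⁻¹ • (p.1 + J p.2), (2 : ℂ)⁻¹ • (p.1 - J p.2))) ⁻¹'
            ((Lp : Set H) ×ˢ (Lm : Set H)) := by
        ext ⟨x, y⟩
        simp only [Set.mem_setOf_eq, Set.mem_preimage, Set.mem_prod, SetLike.mem_coe]
        constructor
        · rintro ⟨hx, rfl⟩
          rcases hdec x hx with ⟨fp, hfp, fm, hfm, rfl⟩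
          rw [hC fp hfp fm hfm]
          have h1 : J (J (fp - fm)) = fp - fm := hJJ _
          rw [h1]
          constructor
          · have : fp + fm + (fp - fm) = (2 : ℂ) • fp := by module
            rw [this, smul_smul]
            norm_num
            exact hfp
          · have : fp + fm - (fp - fm) = (2 : ℂ) • fm := by module
            rw [this, smul_smul]
            norm_num
            exact hfm
        · rintro ⟨ha, hb⟩
          set a := (2 : ℂ)⁻¹ • (x + J y) with hadef
          set b := (2 : ℂ)⁻¹ • (x - J y) with hbdef
          have hxab : x = a + b := by rw [hadef, hbdef]; module
          have hJyab : J y = a - b := by rw [hadef, hbdef]; module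
          have hx𝒟 : x ∈ 𝒟 := by
            rw [hsup, hxab]
            exact Submodule.add_mem _ (Submodule.mem_sup_left ha)
              (Submodule.mem_sup_right hb)
          refine ⟨hx𝒟, ?_⟩
          have hCx : C x = a - b := by rw [hxab]; exact hC a ha b hb
          rw [hCx, ← hJyab, hJJ]
      rw [hset]
      have hcont : Continuous (fun p : H × H =>
          ((2 : ℂ)⁻¹ • (p.1 + J p.2), (2 : ℂ)⁻¹ • (p.1 - J p.2))) :=
        Continuous.prodMk
          ((continuous_fst.add (J.continuous.comp continuous_snd)).const_smul _)
          ((continuous_fst.sub (J.continuous.comp continuous_snd)).const_smul _)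
      exact (hLpc.prod hLmc).preimage hcont
  · rintro ⟨hCD, hinv, hsymm, hposg, hgraph⟩
    set Lp : Submodule ℂ H := 𝒟 ⊓ LinearMap.ker (C - LinearMap.id) with hLpdef
    set Lm : Submodule ℂ H := 𝒟 ⊓ LinearMap.ker (C + LinearMap.id) with hLmdef
    have hmemp : ∀ f : H, f ∈ Lp ↔ f ∈ 𝒟 ∧ C f = f := by
      intro f
      simp only [hLpdef, Submodule.mem_inf, LinearMap.mem_ker, LinearMap.sub_apply,
        LinearMap.id_apply, sub_eq_zero]
    have hmemm : ∀ f : H, f ∈ Lm ↔ f ∈ 𝒟 ∧ C f = -f := by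
      intro f
      simp only [hLmdef, Submodule.mem_inf, LinearMap.mem_ker, LinearMap.add_apply,
        LinearMap.id_apply, add_eq_zero_iff_eq_neg]
    refine ⟨Lp, Lm, ?_, ?_, ?_, ?_, ?_, ?_, ?_, ?_⟩
    · -- Lp closed
      have hset : (Lp : Set H) =
          (fun f : H => (f, J f)) ⁻¹' {p : H × H | p.1 ∈ 𝒟 ∧ p.2 = J (C p.1)} := by
        ext f
        simp only [Set.mem_preimage, Set.mem_setOf_eq, SetLike.mem_coe, hmemp]
        constructor
        · rintro ⟨hf, hc⟩; exact ⟨hf, by rw [hc]⟩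
        · rintro ⟨hf, hc⟩
          refine ⟨hf, ?_⟩
          have := congrArg J hc
          rwa [hJJ, hJJ, eq_comm] at this
      rw [hset]
      exact hgraph.preimage (continuous_id.prodMk J.continuous)
    · -- Lm closed
      have hset : (Lm : Set H) =
          (fun f : H => (f, -J f)) ⁻¹' {p : H × H | p.1 ∈ 𝒟 ∧ p.2 = J (C p.1)} := by
        ext f
        simp only [Set.mem_preimage, Set.mem_setOf_eq, SetLike.mem_coe, hmemm]
        constructor
        · rintro ⟨hf, hc⟩
          refine ⟨hf, ?_⟩
          rw [hc, map_neg]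
        · rintro ⟨hf, hc⟩
          refine ⟨hf, ?_⟩
          have := congrArg J hc
          rw [map_neg, hJJ, hJJ] at this
          exact this.symm
      rw [hset]
      exact hgraph.preimage (continuous_id.prodMk J.continuous.neg)
    · -- positive on Lp
      intro f hf hfne
      rcases (hmemp f).mp hf with ⟨hf𝒟, hc⟩
      have := hposg f hf𝒟 hfne
      rwa [hc] at this
    · -- negative on Lm
      intro f hf hfne
      rcases (hmemm f).mp hf with ⟨hf𝒟, hc⟩
      have := hposg f hf𝒟 hfne
      rw [hc, map_neg, inner_neg_left] at this
      have h2 : (inner ℂ (J f) f : ℂ).re = -(-(inner ℂ (J f) f : ℂ)).re := by simp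
      rw [h2]
      linarith
    · -- orthogonality
      intro fp hfp fm hfm
      rcases (hmemp fp).mp hfp with ⟨hfp𝒟, hcp⟩
      rcases (hmemm fm).mp hfm with ⟨hfm𝒟, hcm⟩
      have h := hsymm fp hfp𝒟 fm hfm𝒟
      rw [hcp, hcm, map_neg, inner_neg_right, ← hsym] at h
      -- h : inner ℂ (J fp) fm = -(inner ℂ (J fp) fm)
      linear_combination (2⁻¹ : ℂ) * h
    · -- trivial intersection
      rw [eq_bot_iff]
      intro f hf
      rcases Submodule.mem_inf.mp hf with ⟨h1, h2⟩
      rcases (hmemp f).mp h1 with ⟨_, hc1⟩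
      rcases (hmemm f).mp h2 with ⟨_, hc2⟩
      have hfe : f = -f := hc1.symm.trans hc2
      have h2f : (2 : ℂ) • f = 0 := by
        rw [two_smul]
        nth_rewrite 2 [hfe]
        exact add_neg_cancel f
      have := smul_eq_zero.mp h2f
      simpa using this
    · -- 𝒟 = Lp ⊔ Lm
      apply le_antisymm
      · intro f hf
        set a := (2 : ℂ)⁻¹ • (f + C f) with hadef
        set b := (2 : ℂ)⁻¹ • (f - C f) with hbdef
        have ha : a ∈ Lp := by
          rw [hmemp]
          constructor
          · exact Submodule.smul_mem _ _ (Submodule.add_mem _ hf (hCD f hf))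
          · rw [hadef, map_smul, map_add, hinv f hf]
            congr 1
            abel
        have hb : b ∈ Lm := by
          rw [hmemm]
          constructor
          · exact Submodule.smul_mem _ _ (Submodule.sub_mem _ hf (hCD f hf))
          · rw [hbdef, map_smul, map_sub, hinv f hf, ← smul_neg]
            congr 1
            abel
        have hfab : f = a + b := by rw [hadef, hbdef]; module
        rw [hfab]
        exact Submodule.add_mem _ (Submodule.mem_sup_left ha) (Submodule.mem_sup_right hb)
      · exact sup_le inf_le_left inf_le_left
    · -- action of C
      intro fp hfp fm hfm
      rcases (hmemp fp).mp hfp with ⟨_, hcp⟩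
      rcases (hmemm fm).mp hfm with ⟨_, hcm⟩
      rw [map_add, hcp, hcm, sub_eq_add_neg]
end
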